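/- arXiv:2504.13558 — 4 statements merged into one kernel-verified Lean document; each statement's English description precedes it below -/
import Mathlib

section
/- Let d, n, K ∈ ℕ with d, n, K ≥ 1. There exists a feedforward network f : ℝ → ℝ of depth K + 3 and width 3n with activation functions ReLU and floor such that for every q ∈ {0, 1, …, n−1} and every x ∈ [2q, 2q+1), f(x) = 3^{1−q}·φ_K(x − 2q). -/
open Finset Real Set MeasureTheory

noncomputable section

/-- Matrix–vector product with explicit inner dimension `m`. -/
def mulVecN (W : ℕ → ℕ → ℝ) (m : ℕ) (v : ℕ → ℝ) : ℕ → ℝ :=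
  fun i => ∑ j ∈ Finset.range m, W i j * v j

/-- Matrix–matrix product with explicit inner dimension `m`. -/
def matMulN (A : ℕ → ℕ → ℝ) (m : ℕ) (B : ℕ → ℕ → ℝ) : ℕ → ℕ → ℝ :=
  fun i j => ∑ t ∈ Finset.range m, A i t * B t j

/-- The ReLU activation. -/
def reluF : ℝ → ℝ := fun x => max x 0

/-- The floor activation. -/
def floorF : ℝ → ℝ := fun x => (⌊x⌋ : ℝ)

/-- Hidden layers of a feedforward network acting on vectors:
`ffLayers dims Wt b act l x` is the output of the `l`-th hidden layer. -/
def ffLayers (dims : ℕ → ℕ) (Wt : ℕ → ℕ → ℕ → ℝ) (b : ℕ → ℕ → ℝ)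
    (act : ℕ → ℕ → ℝ → ℝ) : ℕ → (ℕ → ℝ) → ℕ → ℝ
  | 0, x => x
  | l + 1, x => fun i =>
      act (l + 1) i (mulVecN (Wt (l + 1)) (dims l) (ffLayers dims Wt b act l x) i + b (l + 1) i)

/-- `f` is a feedforward neural network function from `ℝ^k` to `ℝ^{k'}` of depth `L` and
width `W`, whose activation functions (which may vary between rows and layers) all belong
to `A`.  Vectors are represented as functions `ℕ → ℝ`; only the first `k` coordinates of the
input and the first `k'` coordinates of the output are relevant. -/
def IsFFNet (k k' L W : ℕ) (A : Set (ℝ → ℝ)) (f : (ℕ → ℝ) → ℕ → ℝ) : Prop :=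
  ∃ (dims : ℕ → ℕ) (Wt : ℕ → ℕ → ℕ → ℝ) (b : ℕ → ℕ → ℝ) (act : ℕ → ℕ → ℝ → ℝ),
    dims 0 = k ∧ dims L = k' ∧ (∀ l, 0 < l → l < L → dims l ≤ W) ∧
    (∀ l i, act l i ∈ A) ∧
    ∀ x, f x = mulVecN (Wt L) (dims (L - 1)) (ffLayers dims Wt b act (L - 1) x)

/-- Hidden layers of a feedforward block acting columnwise on matrices, with
column-dependent biases. -/
def ffBlockLayers (dims : ℕ → ℕ) (Wt : ℕ → ℕ → ℕ → ℝ) (B : ℕ → ℕ → ℕ → ℝ)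
    (act : ℕ → ℕ → ℝ → ℝ) : ℕ → (ℕ → ℕ → ℝ) → ℕ → ℕ → ℝ
  | 0, X => X
  | l + 1, X => fun i s =>
      act (l + 1) i
        (mulVecN (Wt (l + 1)) (dims l) (fun t => ffBlockLayers dims Wt B act l X t s) i
          + B (l + 1) i s)

/-- `F` is a feedforward block from `ℝ^{k×n}` to `ℝ^{k'×n}` of depth `L` and width `W`,
with activation functions in `A`; it acts on each column by the same affine maps, the bias
matrices may have distinct columns, and in each layer every row uses some activation from
`A` (possibly varying between rows and layers). -/
def IsFFBlock (k k' L W : ℕ) (A : Set (ℝ → ℝ)) (F : (ℕ → ℕ → ℝ) → ℕ → ℕ → ℝ) : Prop :=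
  ∃ (dims : ℕ → ℕ) (Wt : ℕ → ℕ → ℕ → ℝ) (B : ℕ → ℕ → ℕ → ℝ) (act : ℕ → ℕ → ℝ → ℝ),
    dims 0 = k ∧ dims L = k' ∧ (∀ l, 0 < l → l < L → dims l ≤ W) ∧
    (∀ l i, act l i ∈ A) ∧
    ∀ X i s,
      F X i s = mulVecN (Wt L) (dims (L - 1))
        (fun t => ffBlockLayers dims Wt B act (L - 1) X t s) i

/-- `F` is a single-head softmax self-attention layer on `m × n` matrices:
`F(X) = X + W_O W_V X σ_S[(W_K X)ᵀ (W_Q X)]`, where the softmax is applied columnwise. -/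
def IsSelfAttn (m n : ℕ) (F : (ℕ → ℕ → ℝ) → ℕ → ℕ → ℝ) : Prop :=
  ∃ (hs : ℕ) (WO WV WK WQ : ℕ → ℕ → ℝ),
    ∀ X i j,
      F X i j = X i j +
        matMulN (matMulN WO hs WV) m
          (matMulN X n (fun a b =>
            Real.exp (∑ u ∈ Finset.range hs, matMulN WK m X u a * matMulN WQ m X u b) /
              ∑ t ∈ Finset.range n,
                Real.exp (∑ u ∈ Finset.range hs, matMulN WK m X u t * matMulN WQ m X u b))) i j

/-- An affine map on matrices, acting columnwise: `A(Y) = W Y + b` with `W` a `k'×k`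
matrix and `b` a bias matrix. -/
def IsAffineM (k : ℕ) (A : (ℕ → ℕ → ℝ) → ℕ → ℕ → ℝ) : Prop :=
  ∃ (W : ℕ → ℕ → ℝ) (b : ℕ → ℕ → ℝ),
    ∀ Y i s, A Y i s = mulVecN W k (fun t => Y t s) i + b i s

/-- Embedding of a `d × n` real matrix into the `ℕ`-indexed representation. -/
def embedM {d n : ℕ} (X : Fin d → Fin n → ℝ) : ℕ → ℕ → ℝ :=
  fun i j => if h : i < d ∧ j < n then X ⟨i, h.1⟩ ⟨j, h.2⟩ else 0

/-- The Hölder class `H^β_Q([0,1]^{d×n}, ℝ^{d×n})`: every component of `f` is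
`(β,Q)`-Hölder on the unit cube w.r.t. the entrywise sup distance. -/
def HolderClassM (d n : ℕ) (β Q : ℝ)
    (f : (Fin d → Fin n → ℝ) → Fin d → Fin n → ℝ) : Prop :=
  ∀ X Y : Fin d → Fin n → ℝ,
    (∀ p q, X p q ∈ Set.Icc (0:ℝ) 1) → (∀ p q, Y p q ∈ Set.Icc (0:ℝ) 1) →
    ∀ r s, |f X r s - f Y r s| ≤ Q * dist X Y ^ β

/-- The `j`-th binary digit of `x` (terminating expansion for dyadic rationals). -/
def binDigit (x : ℝ) (j : ℕ) : ℤ :=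
  ⌊(2:ℝ) ^ j * x⌋ - 2 * ⌊(2:ℝ) ^ (j - 1) * x⌋

/-- The truncated inner function `φ_K(x) = Σ_{j=1}^K 2 a_j^x 3^{-1-D(j-1)}`. -/
def phiK (D K : ℕ) (x : ℝ) : ℝ :=
  ∑ j ∈ Finset.Icc 1 K, 2 * (binDigit x j : ℝ) * ((3:ℝ) ^ (1 + D * (j - 1)))⁻¹

/-- The inner function `φ(x) = Σ_{j=1}^∞ 2 a_j^x 3^{-1-D(j-1)}`. -/
def phiInf (D : ℕ) (x : ℝ) : ℝ :=
  ∑' j : ℕ, 2 * (binDigit x (j + 1) : ℝ) * ((3:ℝ) ^ (1 + D * j))⁻¹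

/-- The inner matrix `Z(X)`: `Z(X)_{rs}` is independent of `r` and equals
`3^{Kdn+1} Σ_{q=1}^n Σ_{p=1}^d 3^{-((p-1)n+q)} φ_K(X_{pq}) + 1 + (s-1) 3^{Kdn}`. -/
def innerZ (d n K : ℕ) (X : Fin d → Fin n → ℝ) (s : Fin n) : ℝ :=
  (3:ℝ) ^ (K * d * n + 1) *
      (∑ q : Fin n, ∑ p : Fin d,
        ((3:ℝ) ^ ((p : ℕ) * n + (q : ℕ) + 1))⁻¹ * phiK (d * n) K (X p q))
    + 1 + (s : ℕ) * (3:ℝ) ^ (K * d * n)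

/-- The Kolmogorov–Arnold inner sum `3 Σ_{q=1}^n Σ_{p=1}^d 3^{-((p-1)n+q)} φ(X_{pq})`. -/
def innerKA (d n : ℕ) (X : Fin d → Fin n → ℝ) : ℝ :=
  3 * ∑ q : Fin n, ∑ p : Fin d,
    ((3:ℝ) ^ ((p : ℕ) * n + (q : ℕ) + 1))⁻¹ * phiInf (d * n) (X p q)

/-- The unit cube `[0,1]^{d×n}`. -/
def unitBox (d n : ℕ) : Set (Fin d → Fin n → ℝ) :=
  {X | ∀ p q, X p q ∈ Set.Icc (0:ℝ) 1}

/-- `f` admits a Kolmogorov–Arnold representation with outer functions `g r s`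
(defined on the middle-thirds Cantor set), which are Hölder with exponent
`β log 2 / (dn log 3)` and constant `2^β Q`. -/
def HasKARep (d n : ℕ) (β Q : ℝ) (f : (Fin d → Fin n → ℝ) → Fin d → Fin n → ℝ)
    (g : Fin d → Fin n → ℝ → ℝ) : Prop :=
  (∀ r s, ∀ x ∈ cantorSet, ∀ y ∈ cantorSet,
      |g r s x - g r s y| ≤ (2:ℝ) ^ β * Q * |x - y| ^ (β * Real.log 2 / ((d * n : ℕ) * Real.log 3))) ∧
  (∀ X ∈ unitBox d n, ∀ r s, f X r s = g r s (innerKA d n X))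

namespace Stmt10Aux

def gam (D K : ℕ) : ℝ := 2 * ((3:ℝ) ^ (1 + D * (K - 1)))⁻¹

def Lam (D K : ℕ) : ℝ :=
  gam D K * ((2:ℝ) ^ (K + 1) +
    ((3:ℝ) ^ D - 2) * ∑ j ∈ Finset.Icc 1 (K - 1), (3:ℝ) ^ (D * (K - 1 - j)) * 2 ^ (j + 1))

def Ac (n i : ℕ) : ℝ := if i < n then (3:ℝ) ^ ((1:ℤ) - (i:ℤ)) else 0

def dims (n K : ℕ) (l : ℕ) : ℕ :=
  if l = 0 then 1 else if l ≤ K + 1 then 3 else if l = K + 2 then 2 * n else 1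

def ci (D K l : ℕ) : ℤ := if l = K + 1 then (3:ℤ) ^ D - 2 else (3:ℤ) ^ D

def Wt (n K D : ℕ) (l i j : ℕ) : ℝ :=
  if l = 1 then (if i = 0 ∧ j = 0 then 1 else if i = 2 ∧ j = 0 then 1 / 2 else 0)
  else if l ≤ K + 1 then
    (if i = 0 ∧ j = 0 then 2
     else if i = 1 ∧ j = 0 then 2
     else if i = 1 ∧ j = 1 then (ci D K l : ℝ)
     else if i = 2 ∧ j = 2 then 1 else 0)
  else if l = K + 2 then
    (if i < n then (if j = 1 then gam D K else if j = 2 then -(Lam D K + 1) else 0)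
     else if i < 2 * n then (if j = 2 then -1 else 0) else 0)
  else
    (if i = 0 then
      (if j < n then Ac n j - Ac n (j + 1)
       else if j < 2 * n then -(Ac n (j - n) - Ac n (j - n + 1)) else 0)
     else 0)

def bb (n K : ℕ) (l i : ℕ) : ℝ :=
  if l = K + 2 then (if i < n then (i : ℝ) else if i < 2 * n then ((i - n : ℕ) : ℝ) else 0)
  else 0

def act (K l i : ℕ) : ℝ → ℝ :=
  if (2 ≤ l ∧ l ≤ K + 1 ∧ i = 1) ∨ (l = 1 ∧ i = 2) then floorF else reluF

def Nv (D K : ℕ) (x : ℝ) : ℕ → ℤ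
  | 0 => 0
  | 1 => 0
  | (l + 2) => ⌊(2:ℝ) ^ (l + 1) * x⌋ + ci D K (l + 2) * Nv D K x (l + 1)

lemma telescope (t : ℝ) (G : ℕ → ℝ) (hG0 : G 0 = 0) (m : ℕ) :
    ∑ j ∈ Finset.Icc 1 (m + 1), (G j - 2 * G (j - 1)) * t ^ (m + 1 - j)
      = G (m + 1) + (t - 2) * ∑ j ∈ Finset.Icc 1 m, t ^ (m - j) * G j := by
  induction m with
  | zero => simp [hG0]
  | succ m ih =>
    rw [show m + 1 + 1 = (m + 1) + 1 from rfl,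
      Finset.sum_Icc_succ_top (by omega : 1 ≤ m + 1 + 1)]
    have e1 : ∀ j ∈ Finset.Icc 1 (m + 1),
        (G j - 2 * G (j - 1)) * t ^ (m + 1 + 1 - j)
          = t * ((G j - 2 * G (j - 1)) * t ^ (m + 1 - j)) := by
      intro j hj
      have hj2 := (Finset.mem_Icc.mp hj).2
      rw [show m + 1 + 1 - j = (m + 1 - j) + 1 from by omega, pow_succ]
      ring
    rw [Finset.sum_congr rfl e1, ← Finset.mul_sum, ih,
      Finset.sum_Icc_succ_top (by omega : 1 ≤ m + 1)]
    have e2 : ∀ j ∈ Finset.Icc 1 m,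
        t ^ (m + 1 - j) * G j = t * (t ^ (m - j) * G j) := by
      intro j hj
      have hj2 := (Finset.mem_Icc.mp hj).2
      rw [show m + 1 - j = (m - j) + 1 from by omega, pow_succ]
      ring
    rw [Finset.sum_congr rfl e2, ← Finset.mul_sum]
    simp only [Nat.sub_self, pow_zero, Nat.add_sub_cancel]
    ring

lemma Nv_eq (D K : ℕ) (x : ℝ) (m : ℕ) (hm : m + 1 ≤ K) :
    Nv D K x (m + 1) = ∑ j ∈ Finset.Icc 1 m, (3:ℤ) ^ (D * (m - j)) * ⌊(2:ℝ) ^ j * x⌋ := by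
  induction m with
  | zero => simp [Nv]
  | succ m ih =>
    show Nv D K x (m + 2) = _
    simp only [Nv]
    rw [ih (by omega)]
    have hci : ci D K (m + 2) = 3 ^ D := by unfold ci; rw [if_neg (by omega)]
    rw [hci, Finset.mul_sum, Finset.sum_Icc_succ_top (by omega : 1 ≤ m + 1)]
    have e : ∀ j ∈ Finset.Icc 1 m,
        (3:ℤ) ^ D * ((3:ℤ) ^ (D * (m - j)) * ⌊(2:ℝ) ^ j * x⌋)
          = (3:ℤ) ^ (D * (m + 1 - j)) * ⌊(2:ℝ) ^ j * x⌋ := by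
      intro j hj
      have hj2 := (Finset.mem_Icc.mp hj).2
      have he : D * (m + 1 - j) = D * (m - j) + D := by
        rw [show m + 1 - j = (m - j) + 1 from by omega, Nat.mul_succ]
      rw [he, pow_add]
      ring
    rw [Finset.sum_congr rfl e]
    simp only [Nat.add_sub_cancel, Nat.sub_self, Nat.mul_zero, pow_zero, one_mul]
    ring


lemma eval_layer (n K D : ℕ) (x : ℝ) (hx : 0 ≤ x) :
    ∀ l, 1 ≤ l → l ≤ K + 1 →
      ffLayers (dims n K) (Wt n K D) (bb n K) (act K) l (fun _ => x) 0 = 2 ^ (l - 1) * x ∧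
      ffLayers (dims n K) (Wt n K D) (bb n K) (act K) l (fun _ => x) 1 = ((Nv D K x l : ℤ) : ℝ) ∧
      ffLayers (dims n K) (Wt n K D) (bb n K) (act K) l (fun _ => x) 2 = ((⌊x / 2⌋ : ℤ) : ℝ) := by
  intro l
  induction l with
  | zero => intro h1 _; exact absurd h1 (by omega)
  | succ l ih =>
    intro _ hl2
    rcases Nat.eq_zero_or_pos l with hl0 | hl1
    · subst hl0
      have key : ∀ i, ffLayers (dims n K) (Wt n K D) (bb n K) (act K) 1 (fun _ => x) i
          = act K 1 i (Wt n K D 1 i 0 * x + bb n K 1 i) := by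
        intro i
        show act K 1 i
            (mulVecN (Wt n K D 1) (dims n K 0) (fun _ => x) i + bb n K 1 i) = _
        have : mulVecN (Wt n K D 1) (dims n K 0) (fun _ => x) i = Wt n K D 1 i 0 * x := by
          simp [mulVecN, dims]
        rw [this]
      have hb1 : ∀ i, bb n K 1 i = 0 := fun i => by unfold bb; rw [if_neg (by omega)]
      refine ⟨?_, ?_, ?_⟩
      · rw [key 0, hb1]
        have ha : act K 1 0 = reluF := by unfold act; rw [if_neg (by omega)]
        have hw : Wt n K D 1 0 0 = 1 := by unfold Wt; rw [if_pos rfl, if_pos ⟨rfl, rfl⟩]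
        rw [ha, hw]
        unfold reluF
        rw [max_eq_left (by linarith)]
        norm_num
      · rw [key 1, hb1]
        have ha : act K 1 1 = reluF := by unfold act; rw [if_neg (by omega)]
        have hw : Wt n K D 1 1 0 = 0 := by
          unfold Wt; rw [if_pos rfl, if_neg (by omega), if_neg (by omega)]
        rw [ha, hw]
        unfold reluF
        norm_num [Nv]
      · rw [key 2, hb1]
        have ha : act K 1 2 = floorF := by unfold act; rw [if_pos (Or.inr ⟨rfl, rfl⟩)]
        have hw : Wt n K D 1 2 0 = 1 / 2 := by
          unfold Wt; rw [if_pos rfl, if_neg (by omega), if_pos ⟨rfl, rfl⟩]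
        rw [ha, hw]
        unfold floorF
        have : (1:ℝ) / 2 * x + 0 = x / 2 := by ring
        rw [this]
    · obtain ⟨m, rfl⟩ : ∃ m, l = m + 1 := ⟨l - 1, by omega⟩
      obtain ⟨ih0, ih1, ih2⟩ := ih (by omega) (by omega)
      rw [Nat.add_sub_cancel] at ih0
      have hdl : dims n K (m + 1) = 3 := by
        unfold dims; rw [if_neg (by omega), if_pos (by omega)]
      have key : ∀ i, ffLayers (dims n K) (Wt n K D) (bb n K) (act K) (m + 2) (fun _ => x) i
          = act K (m + 2) i (Wt n K D (m + 2) i 0 * (2 ^ m * x)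
              + Wt n K D (m + 2) i 1 * ((Nv D K x (m + 1) : ℤ) : ℝ)
              + Wt n K D (m + 2) i 2 * ((⌊x / 2⌋ : ℤ) : ℝ)) := by
        intro i
        show act K (m + 2) i (mulVecN (Wt n K D (m + 2)) (dims n K (m + 1))
            (ffLayers (dims n K) (Wt n K D) (bb n K) (act K) (m + 1) (fun _ => x)) i
            + bb n K (m + 2) i) = _
        have hb : bb n K (m + 2) i = 0 := by unfold bb; rw [if_neg (by omega)]
        rw [hdl, hb, add_zero]
        congr 1
        unfold mulVecN
        rw [Finset.sum_range_succ, Finset.sum_range_succ, Finset.sum_range_one,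
          ih0, ih1, ih2]
      refine ⟨?_, ?_, ?_⟩
      · rw [key 0]
        have ha : act K (m + 2) 0 = reluF := by unfold act; rw [if_neg (by omega)]
        have h0 : Wt n K D (m + 2) 0 0 = 2 := by
          unfold Wt; rw [if_neg (by omega), if_pos (by omega), if_pos ⟨rfl, rfl⟩]
        have h1 : Wt n K D (m + 2) 0 1 = 0 := by
          unfold Wt
          rw [if_neg (by omega), if_pos (by omega), if_neg (by omega), if_neg (by omega),
            if_neg (by omega), if_neg (by omega)]
        have h2 : Wt n K D (m + 2) 0 2 = 0 := by
          unfold Wt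
          rw [if_neg (by omega), if_pos (by omega), if_neg (by omega), if_neg (by omega),
            if_neg (by omega), if_neg (by omega)]
        rw [ha, h0, h1, h2]
        unfold reluF
        have harg : (2:ℝ) * (2 ^ m * x) + 0 * ((Nv D K x (m + 1) : ℤ) : ℝ)
            + 0 * ((⌊x / 2⌋ : ℤ) : ℝ) = 2 ^ (m + 1) * x := by
          rw [pow_succ]; ring
        rw [harg, max_eq_left (mul_nonneg (by positivity) hx),
          show m + 2 - 1 = m + 1 from rfl]
      · rw [key 1]
        have ha : act K (m + 2) 1 = floorF := by
          unfold act; rw [if_pos (Or.inl ⟨by omega, by omega, rfl⟩)]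
        have h0 : Wt n K D (m + 2) 1 0 = 2 := by
          unfold Wt
          rw [if_neg (by omega), if_pos (by omega), if_neg (by omega), if_pos ⟨rfl, rfl⟩]
        have h1 : Wt n K D (m + 2) 1 1 = (ci D K (m + 2) : ℝ) := by
          unfold Wt
          rw [if_neg (by omega), if_pos (by omega), if_neg (by omega), if_neg (by omega),
            if_pos ⟨rfl, rfl⟩]
        have h2 : Wt n K D (m + 2) 1 2 = 0 := by
          unfold Wt
          rw [if_neg (by omega), if_pos (by omega), if_neg (by omega), if_neg (by omega),
            if_neg (by omega), if_neg (by omega)]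
        rw [ha, h0, h1, h2]
        unfold floorF
        have harg : (2:ℝ) * (2 ^ m * x) + (ci D K (m + 2) : ℝ) * ((Nv D K x (m + 1) : ℤ) : ℝ)
            + 0 * ((⌊x / 2⌋ : ℤ) : ℝ)
            = 2 ^ (m + 1) * x + ((ci D K (m + 2) * Nv D K x (m + 1) : ℤ) : ℝ) := by
          push_cast
          rw [pow_succ]
          ring
        rw [harg, Int.floor_add_intCast]
        norm_cast
        simp [Nv]
      · rw [key 2]
        have ha : act K (m + 2) 2 = reluF := by unfold act; rw [if_neg (by omega)]
        have h0 : Wt n K D (m + 2) 2 0 = 0 := by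
          unfold Wt
          rw [if_neg (by omega), if_pos (by omega), if_neg (by omega), if_neg (by omega),
            if_neg (by omega), if_neg (by omega)]
        have h1 : Wt n K D (m + 2) 2 1 = 0 := by
          unfold Wt
          rw [if_neg (by omega), if_pos (by omega), if_neg (by omega), if_neg (by omega),
            if_neg (by omega), if_neg (by omega)]
        have h2 : Wt n K D (m + 2) 2 2 = 1 := by
          unfold Wt
          rw [if_neg (by omega), if_pos (by omega), if_neg (by omega), if_neg (by omega),
            if_neg (by omega), if_pos ⟨rfl, rfl⟩]
        rw [ha, h0, h1, h2]
        unfold reluF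
        have harg : (0:ℝ) * (2 ^ m * x) + 0 * ((Nv D K x (m + 1) : ℤ) : ℝ)
            + 1 * ((⌊x / 2⌋ : ℤ) : ℝ) = ((⌊x / 2⌋ : ℤ) : ℝ) := by ring
        rw [harg]
        apply max_eq_left
        have : (0:ℤ) ≤ ⌊x / 2⌋ := Int.floor_nonneg.mpr (by linarith)
        exact_mod_cast this

end Stmt10Aux

theorem stmt10 (d n K : ℕ) (hd : 1 ≤ d) (hn : 1 ≤ n) (hK : 1 ≤ K) :
    ∃ F : (ℕ → ℝ) → ℕ → ℝ,
      IsFFNet 1 1 (K + 3) (3 * n) {reluF, floorF} F ∧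
      ∀ q : ℕ, q < n → ∀ x : ℝ, x ∈ Set.Ico (2 * (q : ℝ)) (2 * (q : ℝ) + 1) →
        F (fun _ => x) 0 = (3:ℝ) ^ ((1 : ℤ) - (q : ℤ)) * phiK (d * n) K (x - 2 * (q : ℝ)) := by
  classical
  open Stmt10Aux in
  set D := d * n with hDdef
  have hD1 : 1 ≤ D := Nat.one_le_iff_ne_zero.mpr (by positivity)
  refine ⟨fun v => mulVecN (Stmt10Aux.Wt n K D (K + 3)) (Stmt10Aux.dims n K (K + 2))
      (ffLayers (Stmt10Aux.dims n K) (Stmt10Aux.Wt n K D) (Stmt10Aux.bb n K)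
        (Stmt10Aux.act K) (K + 2) v), ?_, ?_⟩
  · refine ⟨Stmt10Aux.dims n K, Stmt10Aux.Wt n K D, Stmt10Aux.bb n K, Stmt10Aux.act K,
      ?_, ?_, ?_, ?_, fun v => rfl⟩
    · simp [Stmt10Aux.dims]
    · unfold Stmt10Aux.dims
      rw [if_neg (by omega), if_neg (by omega), if_neg (by omega)]
    · intro l hl0 hlL
      unfold Stmt10Aux.dims
      split_ifs <;> omega
    · intro l i
      unfold Stmt10Aux.act
      split_ifs
      · exact Set.mem_insert_iff.mpr (Or.inr rfl)
      · exact Set.mem_insert_iff.mpr (Or.inl rfl)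
  · intro q hq x hx
    obtain ⟨hx1, hx2⟩ := hx
    have hx0 : (0:ℝ) ≤ x := le_trans (by positivity) hx1
    set x' := x - 2 * (q:ℝ) with hxp
    have hx'0 : 0 ≤ x' := by rw [hxp]; linarith
    have hx'1 : x' < 1 := by rw [hxp]; linarith
    have hqf : ⌊x / 2⌋ = (q:ℤ) := by
      rw [Int.floor_eq_iff]
      push_cast
      constructor <;> linarith
    set G : ℕ → ℤ := fun j => ⌊(2:ℝ) ^ j * x'⌋ with hGdef
    have hG0 : G 0 = 0 := by
      show ⌊(2:ℝ) ^ 0 * x'⌋ = 0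
      rw [pow_zero, one_mul]
      exact Int.floor_eq_zero_iff.mpr ⟨hx'0, hx'1⟩
    have hT : ∀ j : ℕ, ⌊(2:ℝ) ^ j * x⌋ = G j + 2 ^ (j + 1) * q := by
      intro j
      have h : (2:ℝ) ^ j * x = 2 ^ j * x' + ((2 ^ (j + 1) * q : ℤ) : ℝ) := by
        rw [hxp]; push_cast; ring
      rw [h, Int.floor_add_intCast]
    have hTR : ∀ j : ℕ, ((⌊(2:ℝ) ^ j * x⌋ : ℤ) : ℝ) = (G j : ℝ) + 2 ^ (j + 1) * (q:ℝ) := by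
      intro j; rw [hT j]; push_cast; ring
    -- digit bounds
    have hdig : ∀ y : ℝ, 0 ≤ ⌊2 * y⌋ - 2 * ⌊y⌋ ∧ ⌊2 * y⌋ - 2 * ⌊y⌋ ≤ 1 := by
      intro y
      have h1 : 2 * ⌊y⌋ ≤ ⌊2 * y⌋ := by
        apply Int.le_floor.mpr; push_cast; linarith [Int.floor_le y]
      have h2 : ⌊2 * y⌋ < 2 * ⌊y⌋ + 2 := by
        apply Int.floor_lt.mpr; push_cast; linarith [Int.lt_floor_add_one y]
      omega
    have hbin : ∀ j, binDigit x' j = G j - 2 * G (j - 1) := fun j => rfl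
    have hbin01 : ∀ j, 1 ≤ j → 0 ≤ binDigit x' j ∧ binDigit x' j ≤ 1 := by
      intro j hj
      obtain ⟨m, rfl⟩ : ∃ m, j = m + 1 := ⟨j - 1, by omega⟩
      have h2 : (2:ℝ) ^ (m + 1) * x' = 2 * (2 ^ m * x') := by rw [pow_succ]; ring
      unfold binDigit
      rw [Nat.add_sub_cancel, h2]
      exact hdig (2 ^ m * x')
    -- phiK bounds
    have hgeom : ∀ M : ℕ, ∑ j ∈ Finset.Icc 1 M, 2 * ((3:ℝ) ^ j)⁻¹ = 1 - ((3:ℝ) ^ M)⁻¹ := by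
      intro M
      induction M with
      | zero => simp
      | succ M ih =>
        rw [Finset.sum_Icc_succ_top (by omega), ih]
        have h3 : (3:ℝ) ^ (M + 1) = 3 ^ M * 3 := pow_succ 3 M
        have h0 : (3:ℝ) ^ M ≠ 0 := by positivity
        field_simp
        ring
    have hphi0 : 0 ≤ phiK D K x' := by
      unfold phiK
      apply Finset.sum_nonneg
      intro j hj
      have hj1 := (Finset.mem_Icc.mp hj).1
      have hb0 : (0:ℝ) ≤ (binDigit x' j : ℝ) := by exact_mod_cast (hbin01 j hj1).1
      have : (0:ℝ) ≤ ((3:ℝ) ^ (1 + D * (j - 1)))⁻¹ := by positivity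
      nlinarith
    have hphi1 : phiK D K x' ≤ 1 := by
      unfold phiK
      have step : ∑ j ∈ Finset.Icc 1 K, 2 * (binDigit x' j : ℝ) * ((3:ℝ) ^ (1 + D * (j - 1)))⁻¹
          ≤ ∑ j ∈ Finset.Icc 1 K, 2 * ((3:ℝ) ^ j)⁻¹ := by
        apply Finset.sum_le_sum
        intro j hj
        obtain ⟨hj1, hj2⟩ := Finset.mem_Icc.mp hj
        have hbR : (binDigit x' j : ℝ) ≤ 1 := by exact_mod_cast (hbin01 j hj1).2
        have hb0 : (0:ℝ) ≤ (binDigit x' j : ℝ) := by exact_mod_cast (hbin01 j hj1).1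
        have hle : (3:ℝ) ^ j ≤ 3 ^ (1 + D * (j - 1)) := by
          apply pow_le_pow_right₀ (by norm_num)
          have h1 : j - 1 ≤ D * (j - 1) := Nat.le_mul_of_pos_left _ (by omega)
          omega
        have hinv : ((3:ℝ) ^ (1 + D * (j - 1)))⁻¹ ≤ ((3:ℝ) ^ j)⁻¹ :=
          inv_anti₀ (by positivity) hle
        have c0 : (0:ℝ) ≤ ((3:ℝ) ^ (1 + D * (j - 1)))⁻¹ := by positivity
        nlinarith
      have h0 : (0:ℝ) ≤ ((3:ℝ) ^ K)⁻¹ := by positivity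
      calc ∑ j ∈ Finset.Icc 1 K, 2 * (binDigit x' j : ℝ) * ((3:ℝ) ^ (1 + D * (j - 1)))⁻¹
          ≤ ∑ j ∈ Finset.Icc 1 K, 2 * ((3:ℝ) ^ j)⁻¹ := step
        _ = 1 - ((3:ℝ) ^ K)⁻¹ := hgeom K
        _ ≤ 1 := by linarith
    -- closed form for Nv (K+1)
    have hNvtop : Stmt10Aux.Nv D K x (K + 1)
        = ⌊(2:ℝ) ^ K * x⌋ + ((3:ℤ) ^ D - 2)
            * ∑ j ∈ Finset.Icc 1 (K - 1), (3:ℤ) ^ (D * (K - 1 - j)) * ⌊(2:ℝ) ^ j * x⌋ := by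
      obtain ⟨m, rfl⟩ : ∃ m, K = m + 1 := ⟨K - 1, by omega⟩
      show Stmt10Aux.Nv D (m + 1) x (m + 2) = _
      simp only [Stmt10Aux.Nv]
      rw [Stmt10Aux.Nv_eq D (m + 1) x m (le_refl _)]
      have hci : Stmt10Aux.ci D (m + 1) (m + 2) = 3 ^ D - 2 := by
        unfold Stmt10Aux.ci; rw [if_pos rfl]
      rw [hci]
      simp only [Nat.add_sub_cancel]
    have hNvR : ((Stmt10Aux.Nv D K x (K + 1) : ℤ) : ℝ)
        = ((G K : ℝ) + 2 ^ (K + 1) * (q:ℝ))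
          + ((3:ℝ) ^ D - 2) * ((∑ j ∈ Finset.Icc 1 (K - 1), ((3:ℝ) ^ D) ^ (K - 1 - j) * (G j : ℝ))
            + (∑ j ∈ Finset.Icc 1 (K - 1), ((3:ℝ) ^ D) ^ (K - 1 - j) * (2:ℝ) ^ (j + 1)) * (q:ℝ)) := by
      rw [hNvtop]
      push_cast
      rw [hTR K]
      have e1 : ∑ j ∈ Finset.Icc 1 (K - 1), (3:ℝ) ^ (D * (K - 1 - j)) * ((⌊(2:ℝ) ^ j * x⌋ : ℤ) : ℝ)
          = (∑ j ∈ Finset.Icc 1 (K - 1), ((3:ℝ) ^ D) ^ (K - 1 - j) * (G j : ℝ))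
            + (∑ j ∈ Finset.Icc 1 (K - 1), ((3:ℝ) ^ D) ^ (K - 1 - j) * (2:ℝ) ^ (j + 1)) * (q:ℝ) := by
        rw [Finset.sum_mul, ← Finset.sum_add_distrib]
        refine Finset.sum_congr rfl fun j hj => ?_
        rw [hTR j, pow_mul]
        ring
      rw [e1]
    -- phiK closed form
    have hinvsplit : ∀ j, 1 ≤ j → j ≤ K →
        ((3:ℝ) ^ (1 + D * (j - 1)))⁻¹ = ((3:ℝ) ^ D) ^ (K - j) * ((3:ℝ) ^ (1 + D * (K - 1)))⁻¹ := by
      intro j h1 h2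
      have key : ((3:ℝ) ^ D) ^ (K - j) * ((3:ℝ) ^ (1 + D * (K - 1)))⁻¹ * (3:ℝ) ^ (1 + D * (j - 1)) = 1 := by
        have hne : ((3:ℝ) ^ (1 + D * (K - 1))) ≠ 0 := by positivity
        rw [← pow_mul]
        field_simp
        rw [← pow_add]
        congr 1
        have : D * (K - j) + D * (j - 1) = D * (K - 1) := by
          rw [← Nat.mul_add]
          congr 1
          omega
        omega
      exact (eq_inv_of_mul_eq_one_left key).symm
    have hphiKeq : phiK D K x'
        = Stmt10Aux.gam D K * ((G K : ℝ)
            + ((3:ℝ) ^ D - 2) * ∑ j ∈ Finset.Icc 1 (K - 1), ((3:ℝ) ^ D) ^ (K - 1 - j) * (G j : ℝ)) := by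
      unfold phiK
      have e1 : ∀ j ∈ Finset.Icc 1 K,
          2 * (binDigit x' j : ℝ) * ((3:ℝ) ^ (1 + D * (j - 1)))⁻¹
            = Stmt10Aux.gam D K * (((fun j => (G j : ℝ)) j - 2 * (fun j => (G j : ℝ)) (j - 1)) * ((3:ℝ) ^ D) ^ (K - j)) := by
        intro j hj
        obtain ⟨hj1, hj2⟩ := Finset.mem_Icc.mp hj
        rw [hbin j, hinvsplit j hj1 hj2]
        unfold Stmt10Aux.gam
        push_cast
        ring
      rw [Finset.sum_congr rfl e1, ← Finset.mul_sum]
      congr 1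
      have htel := Stmt10Aux.telescope ((3:ℝ) ^ D) (fun j => (G j : ℝ))
        (Int.cast_eq_zero.mpr hG0) (K - 1)
      rw [show K - 1 + 1 = K from by omega] at htel
      exact htel
    have hphi : Stmt10Aux.gam D K * ((Stmt10Aux.Nv D K x (K + 1) : ℤ) : ℝ)
        - Stmt10Aux.Lam D K * (q:ℝ) = phiK D K x' := by
      rw [hNvR, hphiKeq]
      unfold Stmt10Aux.Lam
      have e2 : ∑ j ∈ Finset.Icc 1 (K - 1), (3:ℝ) ^ (D * (K - 1 - j)) * 2 ^ (j + 1)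
          = ∑ j ∈ Finset.Icc 1 (K - 1), ((3:ℝ) ^ D) ^ (K - 1 - j) * 2 ^ (j + 1) :=
        Finset.sum_congr rfl fun j _ => by rw [pow_mul]
      rw [e2]
      ring
    -- network evaluation
    set E := ffLayers (Stmt10Aux.dims n K) (Stmt10Aux.Wt n K D) (Stmt10Aux.bb n K)
      (Stmt10Aux.act K) with hEdef
    obtain ⟨hv0, hv1, hv2⟩ := Stmt10Aux.eval_layer n K D x hx0 (K + 1) (by omega) (le_refl _)
    rw [Nat.add_sub_cancel] at hv0
    rw [hqf] at hv2
    rw [← hEdef] at hv0 hv1 hv2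
    set phi := Stmt10Aux.gam D K * ((Stmt10Aux.Nv D K x (K + 1) : ℤ) : ℝ)
      - Stmt10Aux.Lam D K * (q:ℝ) with hphidef
    have hphi0' : 0 ≤ phi := by rw [hphi]; exact hphi0
    have hphi1' : phi ≤ 1 := by rw [hphi]; exact hphi1
    have hdK1 : Stmt10Aux.dims n K (K + 1) = 3 := by
      unfold Stmt10Aux.dims; rw [if_neg (by omega), if_pos (by omega)]
    have hact2 : ∀ i, Stmt10Aux.act K (K + 2) i = reluF := by
      intro i; unfold Stmt10Aux.act; rw [if_neg (by omega)]
    have hW2a : ∀ i j, i < n → Stmt10Aux.Wt n K D (K + 2) i j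
        = (if j = 1 then Stmt10Aux.gam D K else if j = 2 then -(Stmt10Aux.Lam D K + 1) else 0) := by
      intro i j hi
      unfold Stmt10Aux.Wt
      rw [if_neg (by omega), if_neg (by omega), if_pos rfl, if_pos hi]
    have hW2b : ∀ i j, n ≤ i → i < 2 * n → Stmt10Aux.Wt n K D (K + 2) i j
        = (if j = 2 then (-1:ℝ) else 0) := by
      intro i j hi1 hi2
      unfold Stmt10Aux.Wt
      rw [if_neg (by omega), if_neg (by omega), if_pos rfl, if_neg (by omega), if_pos hi2]
    have hb2 : ∀ i, Stmt10Aux.bb n K (K + 2) i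
        = (if i < n then (i:ℝ) else if i < 2 * n then ((i - n : ℕ) : ℝ) else 0) := by
      intro i; unfold Stmt10Aux.bb; rw [if_pos rfl]
    have hstep : ∀ i, E (K + 2) (fun _ => x) i
        = reluF (Stmt10Aux.Wt n K D (K + 2) i 0 * (2 ^ K * x)
            + Stmt10Aux.Wt n K D (K + 2) i 1 * ((Stmt10Aux.Nv D K x (K + 1) : ℤ) : ℝ)
            + Stmt10Aux.Wt n K D (K + 2) i 2 * ((q:ℤ):ℝ)
            + Stmt10Aux.bb n K (K + 2) i) := by
      intro i
      show Stmt10Aux.act K (K + 2) i (mulVecN (Stmt10Aux.Wt n K D (K + 2))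
          (Stmt10Aux.dims n K (K + 1)) (E (K + 1) (fun _ => x)) i
          + Stmt10Aux.bb n K (K + 2) i) = _
      rw [hact2, hdK1]
      congr 1
      congr 1
      unfold mulVecN
      rw [Finset.sum_range_succ, Finset.sum_range_succ, Finset.sum_range_one, hv0, hv1, hv2]
    have hEh : ∀ j, j < n → E (K + 2) (fun _ => x) j
        = if q ≤ j then phi + ((j:ℝ) - (q:ℝ)) else 0 := by
      intro j hj
      have w0 : Stmt10Aux.Wt n K D (K + 2) j 0 = 0 := by rw [hW2a j 0 hj]; norm_num
      have w1 : Stmt10Aux.Wt n K D (K + 2) j 1 = Stmt10Aux.gam D K := by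
        rw [hW2a j 1 hj]; norm_num
      have w2 : Stmt10Aux.Wt n K D (K + 2) j 2 = -(Stmt10Aux.Lam D K + 1) := by
        rw [hW2a j 2 hj]; norm_num
      have b0 : Stmt10Aux.bb n K (K + 2) j = (j:ℝ) := by rw [hb2 j, if_pos hj]
      rw [hstep j, w0, w1, w2, b0]
      have hval : (0:ℝ) * (2 ^ K * x)
          + Stmt10Aux.gam D K * ((Stmt10Aux.Nv D K x (K + 1) : ℤ) : ℝ)
          + -(Stmt10Aux.Lam D K + 1) * (((q:ℕ):ℤ):ℝ) + (j:ℝ) = phi + ((j:ℝ) - (q:ℝ)) := by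
        rw [hphidef]; push_cast; ring
      unfold reluF
      rw [hval]
      by_cases hqj : q ≤ j
      · rw [if_pos hqj]
        have : (q:ℝ) ≤ (j:ℝ) := by exact_mod_cast hqj
        exact max_eq_left (by linarith)
      · rw [if_neg hqj]
        have : (j:ℝ) + 1 ≤ (q:ℝ) := by exact_mod_cast (by omega : j + 1 ≤ q)
        exact max_eq_right (by linarith)
    have hEg : ∀ j, j < n → E (K + 2) (fun _ => x) (n + j)
        = if q ≤ j then ((j:ℝ) - (q:ℝ)) else 0 := by
      intro j hj
      have w0 : Stmt10Aux.Wt n K D (K + 2) (n + j) 0 = 0 := by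
        rw [hW2b (n + j) 0 (by omega) (by omega)]; norm_num
      have w1 : Stmt10Aux.Wt n K D (K + 2) (n + j) 1 = 0 := by
        rw [hW2b (n + j) 1 (by omega) (by omega)]; norm_num
      have w2 : Stmt10Aux.Wt n K D (K + 2) (n + j) 2 = -1 := by
        rw [hW2b (n + j) 2 (by omega) (by omega)]; norm_num
      have b0 : Stmt10Aux.bb n K (K + 2) (n + j) = (j:ℝ) := by
        rw [hb2 (n + j), if_neg (by omega), if_pos (by omega), Nat.add_sub_cancel_left]
      rw [hstep (n + j), w0, w1, w2, b0]
      have hval : (0:ℝ) * (2 ^ K * x)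
          + 0 * ((Stmt10Aux.Nv D K x (K + 1) : ℤ) : ℝ)
          + (-1) * (((q:ℕ):ℤ):ℝ) + (j:ℝ) = (j:ℝ) - (q:ℝ) := by push_cast; ring
      unfold reluF
      rw [hval]
      by_cases hqj : q ≤ j
      · rw [if_pos hqj]
        have : (q:ℝ) ≤ (j:ℝ) := by exact_mod_cast hqj
        exact max_eq_left (by linarith)
      · rw [if_neg hqj]
        have : (j:ℝ) + 1 ≤ (q:ℝ) := by exact_mod_cast (by omega : j + 1 ≤ q)
        exact max_eq_right (by linarith)
    have hd2 : Stmt10Aux.dims n K (K + 2) = 2 * n := by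
      unfold Stmt10Aux.dims; rw [if_neg (by omega), if_neg (by omega), if_pos rfl]
    have hWo : ∀ j, Stmt10Aux.Wt n K D (K + 3) 0 j
        = (if j < n then Stmt10Aux.Ac n j - Stmt10Aux.Ac n (j + 1)
           else if j < 2 * n then -(Stmt10Aux.Ac n (j - n) - Stmt10Aux.Ac n (j - n + 1)) else 0) := by
      intro j
      unfold Stmt10Aux.Wt
      rw [if_neg (by omega), if_neg (by omega), if_neg (by omega), if_pos rfl]
    show mulVecN (Stmt10Aux.Wt n K D (K + 3)) (Stmt10Aux.dims n K (K + 2))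
        (E (K + 2) (fun _ => x)) 0 = _
    rw [hd2]
    unfold mulVecN
    rw [two_mul, Finset.sum_range_add]
    have hsum1 : ∑ j ∈ Finset.range n, Stmt10Aux.Wt n K D (K + 3) 0 j * E (K + 2) (fun _ => x) j
        = ∑ j ∈ Finset.range n, (if q ≤ j then (Stmt10Aux.Ac n j - Stmt10Aux.Ac n (j + 1)) * (phi + ((j:ℝ) - (q:ℝ))) else 0) := by
      refine Finset.sum_congr rfl fun j hj => ?_
      have hjn := Finset.mem_range.mp hj
      rw [hWo j, if_pos hjn, hEh j hjn]
      by_cases hqj : q ≤ j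
      · rw [if_pos hqj, if_pos hqj]
      · rw [if_neg hqj, if_neg hqj, mul_zero]
    have hsum2 : ∑ j ∈ Finset.range n, Stmt10Aux.Wt n K D (K + 3) 0 (n + j) * E (K + 2) (fun _ => x) (n + j)
        = ∑ j ∈ Finset.range n, (if q ≤ j then -((Stmt10Aux.Ac n j - Stmt10Aux.Ac n (j + 1)) * ((j:ℝ) - (q:ℝ))) else 0) := by
      refine Finset.sum_congr rfl fun j hj => ?_
      have hjn := Finset.mem_range.mp hj
      rw [hWo (n + j), if_neg (by omega), if_pos (by omega), Nat.add_sub_cancel_left,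
        hEg j hjn]
      by_cases hqj : q ≤ j
      · rw [if_pos hqj, if_pos hqj]; ring
      · rw [if_neg hqj, if_neg hqj, mul_zero]
    rw [hsum1, hsum2, ← Finset.sum_add_distrib]
    have hsum3 : ∀ j ∈ Finset.range n,
        ((if q ≤ j then (Stmt10Aux.Ac n j - Stmt10Aux.Ac n (j + 1)) * (phi + ((j:ℝ) - (q:ℝ))) else 0)
          + (if q ≤ j then -((Stmt10Aux.Ac n j - Stmt10Aux.Ac n (j + 1)) * ((j:ℝ) - (q:ℝ))) else 0))
        = (if q ≤ j then (Stmt10Aux.Ac n j - Stmt10Aux.Ac n (j + 1)) * phi else 0) := by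
      intro j _
      by_cases hqj : q ≤ j
      · rw [if_pos hqj, if_pos hqj, if_pos hqj]; ring
      · rw [if_neg hqj, if_neg hqj, if_neg hqj]; ring
    rw [Finset.sum_congr rfl hsum3, Finset.range_eq_Ico,
      ← Finset.sum_Ico_consecutive _ (Nat.zero_le q) (le_of_lt hq)]
    have hz : ∑ j ∈ Finset.Ico 0 q,
        (if q ≤ j then (Stmt10Aux.Ac n j - Stmt10Aux.Ac n (j + 1)) * phi else 0) = 0 :=
      Finset.sum_eq_zero fun j hj => by
        rw [if_neg (by exact fun h => absurd (Finset.mem_Ico.mp hj).2 (by omega))]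
    have he : ∑ j ∈ Finset.Ico q n,
        (if q ≤ j then (Stmt10Aux.Ac n j - Stmt10Aux.Ac n (j + 1)) * phi else 0)
        = ∑ j ∈ Finset.Ico q n, (Stmt10Aux.Ac n j - Stmt10Aux.Ac n (j + 1)) * phi :=
      Finset.sum_congr rfl fun j hj => if_pos (Finset.mem_Ico.mp hj).1
    rw [hz, zero_add, he, ← Finset.sum_mul]
    have htel : ∑ j ∈ Finset.Ico q n, (Stmt10Aux.Ac n j - Stmt10Aux.Ac n (j + 1))
        = Stmt10Aux.Ac n q := by
      rw [Finset.sum_Ico_eq_sum_range]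
      have hterm : ∀ i, Stmt10Aux.Ac n (q + i) - Stmt10Aux.Ac n (q + i + 1)
          = (fun i => Stmt10Aux.Ac n (q + i)) i - (fun i => Stmt10Aux.Ac n (q + i)) (i + 1) := by
        intro i
        simp only []
        rw [show q + (i + 1) = q + i + 1 from rfl]
      calc ∑ i ∈ Finset.range (n - q), (Stmt10Aux.Ac n (q + i) - Stmt10Aux.Ac n (q + i + 1))
          = ∑ i ∈ Finset.range (n - q),
              ((fun i => Stmt10Aux.Ac n (q + i)) i - (fun i => Stmt10Aux.Ac n (q + i)) (i + 1)) :=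
            Finset.sum_congr rfl fun i _ => hterm i
        _ = Stmt10Aux.Ac n (q + 0) - Stmt10Aux.Ac n (q + (n - q)) :=
            Finset.sum_range_sub' (fun i => Stmt10Aux.Ac n (q + i)) (n - q)
        _ = Stmt10Aux.Ac n q := by
            rw [Nat.add_zero, show q + (n - q) = n from by omega]
            have : Stmt10Aux.Ac n n = 0 := by unfold Stmt10Aux.Ac; rw [if_neg (by omega)]
            rw [this, sub_zero]
    rw [htel, hphi]
    unfold Stmt10Aux.Ac
    rw [if_pos hq]

end
end

section
/- Let M ∈ ℕ with M ≥ 1, and let θ_1, …, θ_M ∈ {0,1}. Then there exists a feedforward network f : ℝ → ℝ of depth 4 and width 2 with activation functions ReLU, sine and x ↦ 2^x such that f(m) = θ_m for every m ∈ {1, …, M}. -/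
open Finset Real Set MeasureTheory

noncomputable section

private lemma tail_geom (m : ℕ) : ∀ M, m ≤ M →
    ∑ j ∈ Finset.Ioc m M, (8:ℝ)^m * ((8:ℝ)^j)⁻¹ = (1 - (8:ℝ)^m * ((8:ℝ)^M)⁻¹)/7 := by
  intro M
  induction M with
  | zero =>
    intro h
    interval_cases m
    simp
  | succ M ih =>
    intro h
    rcases Nat.lt_or_ge m (M+1) with h' | h'
    · have hm : m ≤ M := Nat.lt_succ_iff.mp h'
      rw [Finset.sum_Ioc_succ_top hm, ih hm]
      have h8 : (8:ℝ)^M ≠ 0 := by positivity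
      have h8' : (8:ℝ)^(M+1) = (8:ℝ)^M * 8 := by rw [pow_succ]
      rw [h8']
      field_simp
      ring
    · have hmm : m = M + 1 := le_antisymm h h'
      subst hmm
      simp

private lemma key (M m : ℕ) (θ : ℕ → ℝ)
    (hθ : ∀ j ∈ Finset.Icc 1 M, θ j = 0 ∨ θ j = 1)
    (hm : m ∈ Finset.Icc 1 M) :
    (θ m = 0 → Real.sin (π * (∑ j ∈ Finset.Icc 1 M, (3/2 - θ j) * ((8:ℝ)^j)⁻¹) * (8:ℝ)^m) ≤ 0) ∧
    (θ m = 1 → 1/2 ≤ Real.sin (π * (∑ j ∈ Finset.Icc 1 M, (3/2 - θ j) * ((8:ℝ)^j)⁻¹) * (8:ℝ)^m)) := by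
  obtain ⟨hm1, hmM⟩ := Finset.mem_Icc.mp hm
  set g : ℕ → ℝ := fun j => (3/2 - θ j) * ((8:ℝ)^j)⁻¹ with hg
  set η : ℕ → ℤ := fun j => if θ j = 1 then 1 else 0 with hη
  have hθη : ∀ j ∈ Finset.Icc 1 M, θ j = (η j : ℝ) := by
    intro j hj
    rcases hθ j hj with h | h <;> simp [hη, h]
  set N : ℤ := ∑ j ∈ Finset.Ioc 0 (m-1), (3 - 2 * η j) * 2 * 8^(m-1-j) with hN
  set T : ℝ := (∑ j ∈ Finset.Ioc m M, g j) * (8:ℝ)^m with hT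
  -- A * 8^m = 2 N
  have hA : (∑ j ∈ Finset.Ioc 0 (m-1), g j) * (8:ℝ)^m = 2 * (N:ℝ) := by
    rw [Finset.sum_mul]
    have hterm : ∀ j ∈ Finset.Ioc 0 (m-1),
        g j * (8:ℝ)^m = (((3 - 2*η j) * 2 * 8^(m-1-j) * 2 : ℤ) : ℝ) := by
      intro j hj
      obtain ⟨hj0, hjm⟩ := Finset.mem_Ioc.mp hj
      have hjM : j ∈ Finset.Icc 1 M := by simp; omega
      have h8 : (8:ℝ)^m = (8:ℝ)^j * ((8:ℝ)^(m-1-j) * 8) := by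
        rw [← pow_succ, ← pow_add]
        congr 1
        omega
      have h8j : (8:ℝ)^j ≠ 0 := by positivity
      rw [hg]
      simp only
      rw [hθη j hjM, h8]
      push_cast
      field_simp
      ring
    rw [Finset.sum_congr rfl hterm, ← Int.cast_sum]
    rw [hN]
    push_cast
    rw [← Finset.sum_mul]
    ring
  -- middle term
  have hmid : g m * (8:ℝ)^m = 3/2 - θ m := by
    rw [hg]
    simp only
    have h8m : (8:ℝ)^m ≠ 0 := by positivity
    field_simp
  -- sum split
  have hsplit : (∑ j ∈ Finset.Icc 1 M, g j) * (8:ℝ)^m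
      = 2 * (N:ℝ) + ((3/2 - θ m) + T) := by
    have e1 : Finset.Icc 1 M = Finset.Ioc 0 M := Finset.Icc_add_one_left_eq_Ioc 0 M
    have e2 : (∑ j ∈ Finset.Ioc 0 (m-1), g j) + ∑ j ∈ Finset.Ioc (m-1) M, g j
        = ∑ j ∈ Finset.Ioc 0 M, g j :=
      Finset.sum_Ioc_consecutive _ (by omega) (by omega)
    have e3 : (∑ j ∈ Finset.Ioc (m-1) m, g j) + ∑ j ∈ Finset.Ioc m M, g j
        = ∑ j ∈ Finset.Ioc (m-1) M, g j :=
      Finset.sum_Ioc_consecutive _ (by omega) (by omega)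
    have e4 : Finset.Ioc (m-1) m = {m} := by
      ext k
      simp only [Finset.mem_Ioc, Finset.mem_singleton]
      omega
    rw [e1, ← e2, ← e3, e4, Finset.sum_singleton, hT]
    rw [add_mul, add_mul, hA, hmid]
  -- tail bounds
  have hT0 : 0 ≤ T := by
    rw [hT]
    apply mul_nonneg _ (by positivity)
    apply Finset.sum_nonneg
    intro j hj
    obtain ⟨hj1, hj2⟩ := Finset.mem_Ioc.mp hj
    have hjM : j ∈ Finset.Icc 1 M := by simp; omega
    rcases hθ j hjM with h | h <;>
      · rw [hg]; simp only [h]; positivity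
  have hT4 : T ≤ 1/4 := by
    rw [hT, Finset.sum_mul]
    have hle : ∀ j ∈ Finset.Ioc m M, g j * (8:ℝ)^m ≤ (3/2) * ((8:ℝ)^m * ((8:ℝ)^j)⁻¹) := by
      intro j hj
      obtain ⟨hj1, hj2⟩ := Finset.mem_Ioc.mp hj
      have hjM : j ∈ Finset.Icc 1 M := by simp; omega
      have h1 : (0:ℝ) < ((8:ℝ)^j)⁻¹ * (8:ℝ)^m := by positivity
      rcases hθ j hjM with h | h <;>
        · rw [hg]; simp only [h]; nlinarith
    calc (∑ j ∈ Finset.Ioc m M, g j * (8:ℝ)^m)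
        ≤ ∑ j ∈ Finset.Ioc m M, (3/2) * ((8:ℝ)^m * ((8:ℝ)^j)⁻¹) := Finset.sum_le_sum hle
      _ = (3/2) * ∑ j ∈ Finset.Ioc m M, (8:ℝ)^m * ((8:ℝ)^j)⁻¹ := by rw [Finset.mul_sum]
      _ = (3/2) * ((1 - (8:ℝ)^m * ((8:ℝ)^M)⁻¹)/7) := by rw [tail_geom m M hmM]
      _ ≤ 1/4 := by
          have : (0:ℝ) ≤ (8:ℝ)^m * ((8:ℝ)^M)⁻¹ := by positivity
          linarith
  -- reduce sine
  have hsin : Real.sin (π * (∑ j ∈ Finset.Icc 1 M, g j) * (8:ℝ)^m)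
      = Real.sin (π * ((3/2 - θ m) + T)) := by
    have : π * (∑ j ∈ Finset.Icc 1 M, g j) * (8:ℝ)^m
        = π * ((3/2 - θ m) + T) + (N:ℝ) * (2 * π) := by
      rw [mul_assoc, hsplit]; ring
    rw [this, Real.sin_add_int_mul_two_pi]
  have hπ := Real.pi_pos
  constructor
  · intro h0
    rw [hsin, h0]
    have harg : π * ((3/2 - 0) + T) = (π * T + π/2) + π := by ring
    rw [harg, Real.sin_add_pi, Real.sin_add_pi_div_two]
    have : 0 ≤ Real.cos (π * T) := by
      apply Real.cos_nonneg_of_mem_Icc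
      constructor <;> nlinarith
    linarith
  · intro h1
    rw [hsin, h1]
    have harg : π * ((3/2 - 1) + T) = π * T + π/2 := by ring
    rw [harg, Real.sin_add_pi_div_two]
    have := Real.cos_le_cos_of_nonneg_of_le_pi (x := π * T) (y := π/3)
      (by nlinarith) (by linarith) (by nlinarith)
    rw [Real.cos_pi_div_three] at this
    linarith

def myDims : ℕ → ℕ := fun l => if l = 3 then 2 else 1
def myWt (a : ℝ) : ℕ → ℕ → ℕ → ℝ := fun l _ j =>
  if l = 1 then 3 else if l = 2 then a else if l = 3 then 2 else if j = 0 then 1 else -1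
def myB : ℕ → ℕ → ℝ := fun l i => if l = 3 ∧ i = 1 then -1 else 0
def myAct : ℕ → ℕ → ℝ → ℝ := fun l _ =>
  if l = 1 then (fun x => (2:ℝ) ^ x) else if l = 2 then Real.sin else reluF
def myF (a : ℝ) : (ℕ → ℝ) → ℕ → ℝ := fun x =>
  mulVecN (myWt a 4) (myDims 3) (ffLayers myDims (myWt a) myB myAct 3 x)

lemma myF_isnet (a : ℝ) :
    IsFFNet 1 1 4 2 {reluF, Real.sin, fun x => (2:ℝ) ^ x} (myF a) := by
  refine ⟨myDims, myWt a, myB, myAct, by simp [myDims], by simp [myDims],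
    fun l _ _ => by simp [myDims]; split <;> omega, ?_, fun x => rfl⟩
  intro l i
  simp only [myAct]
  split_ifs <;> simp [Set.mem_insert_iff]

lemma myF_eval (a c : ℝ) :
    myF a (fun _ => c) 0 =
      max (2 * Real.sin (a * (2:ℝ) ^ (3 * c + 0) + 0) + 0) 0
        - max (2 * Real.sin (a * (2:ℝ) ^ (3 * c + 0) + 0) + -1) 0 := by
  simp [myF, mulVecN, ffLayers, myDims, myWt, myB, myAct, reluF, Finset.sum_range_succ]
  ring

theorem stmt12 (M : ℕ) (hM : 1 ≤ M) (θ : ℕ → ℝ)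
    (hθ : ∀ m ∈ Finset.Icc 1 M, θ m = 0 ∨ θ m = 1) :
    ∃ F : (ℕ → ℝ) → ℕ → ℝ,
      IsFFNet 1 1 4 2 {reluF, Real.sin, fun x => (2:ℝ) ^ x} F ∧
      ∀ m ∈ Finset.Icc 1 M, F (fun _ => (m : ℝ)) 0 = θ m := by
  refine ⟨myF (π * ∑ j ∈ Finset.Icc 1 M, (3/2 - θ j) * ((8:ℝ)^j)⁻¹),
    myF_isnet _, ?_⟩
  intro m hm
  have h8 : (2:ℝ) ^ (3 * (m:ℝ)) = (8:ℝ) ^ m := by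
    have h3 : (3:ℝ) * (m:ℝ) = ((3*m : ℕ) : ℝ) := by push_cast; ring
    rw [h3, Real.rpow_natCast, pow_mul]
    norm_num
  have hk := key M m θ hθ hm
  rw [myF_eval]
  simp only [add_zero]
  rw [h8]
  set u : ℝ := Real.sin
    (π * (∑ j ∈ Finset.Icc 1 M, (3/2 - θ j) * ((8:ℝ)^j)⁻¹) * (8:ℝ)^m) with hu
  rcases hθ m hm with h0 | h1
  · have hle : u ≤ 0 := hk.1 h0
    rw [h0, max_eq_right (by linarith), max_eq_right (by linarith)]
    ring
  · have hge : 1/2 ≤ u := hk.2 h1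
    rw [h1, max_eq_left (by linarith), max_eq_left (by linarith)]
    ring

end
end

section
/- Let M ∈ ℕ with M ≥ 1, and let θ_1, …, θ_M ∈ {0,1}. Then there exists a feedforward network f : ℝ → ℝ of depth 5 and width 1 with activation functions ReLU, cosine and x ↦ 3^x such that f(m) = θ_m for every m ∈ {1, …, M}. -/
open Finset Real Set MeasureTheory

noncomputable section

/-- Geometric tail sum identity. -/
lemma geoAux (N : ℕ) : ∑ j ∈ Finset.range N, 2 * ((3:ℝ) ^ (j + 2))⁻¹
    = 1/3 - ((3:ℝ) ^ (N + 1))⁻¹ := by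
  induction N with
  | zero => norm_num
  | succ N ih =>
    rw [Finset.sum_range_succ, ih]
    have h1 : (3:ℝ) ^ (N + 2) ≠ 0 := by positivity
    have h2 : (3:ℝ) ^ (N + 1) ≠ 0 := by positivity
    have h3 : (3:ℝ) ^ (N + 2) = 3 ^ (N + 1) * 3 := by rw [pow_succ]
    field_simp
    ring_nf

/-- Key computation: value of the clamped cosine at integer inputs. -/
lemma keyAux (M : ℕ) (θ : ℕ → ℝ) (hθ : ∀ k ∈ Finset.Icc 1 M, θ k = 0 ∨ θ k = 1)
    (m : ℕ) (hm : m ∈ Finset.Icc 1 M) :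
    reluF (-2 * reluF (Real.cos (π * (∑ k ∈ Finset.Icc 1 M, 2 * θ k * ((3:ℝ) ^ k)⁻¹)
      * (3:ℝ) ^ (m - 1))) + 1) = θ m := by
  obtain ⟨hm1, hm2⟩ := Finset.mem_Icc.mp hm
  set t : ℝ := ∑ k ∈ Finset.Icc 1 M, 2 * θ k * ((3:ℝ) ^ k)⁻¹ with ht
  -- the integer part
  classical
  set ψ : ℕ → ℤ := fun k => if θ k = 1 then 1 else 0 with hψdef
  have hψ : ∀ k ∈ Finset.Icc 1 M, θ k = (ψ k : ℝ) := by
    intro k hk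
    rcases hθ k hk with h | h <;> simp [hψdef, h]
  set n : ℤ := ∑ k ∈ Finset.Ioc 0 (m-1), ψ k * 3 ^ (m - 1 - k) with hn
  set r : ℝ := ∑ k ∈ Finset.Ioc m M, 2 * θ k * ((3:ℝ) ^ (k - m + 1))⁻¹ with hr
  have hθm01 := hθ m hm
  -- bounds on r
  have hθb : ∀ k ∈ Finset.Ioc m M, 0 ≤ θ k ∧ θ k ≤ 1 := by
    intro k hk
    have hk' : k ∈ Finset.Icc 1 M := by
      simp only [Finset.mem_Ioc] at hk
      exact Finset.mem_Icc.mpr ⟨le_trans hm1 (le_of_lt hk.1), hk.2⟩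
    rcases hθ k hk' with h | h <;> simp [h]
  have hr0 : 0 ≤ r := by
    apply Finset.sum_nonneg
    intro k hk
    have := (hθb k hk).1
    positivity
  have hr3 : r ≤ 1/3 := by
    have step1 : r ≤ ∑ k ∈ Finset.Ioc m M, 2 * ((3:ℝ) ^ (k - m + 1))⁻¹ := by
      apply Finset.sum_le_sum
      intro k hk
      have h1 := (hθb k hk).2
      have h2 : (0:ℝ) < ((3:ℝ) ^ (k - m + 1))⁻¹ := by positivity
      nlinarith
    have hioc : Finset.Ioc m M = Finset.Ico (m+1) (M+1) := by
      ext k; simp [Finset.mem_Ioc, Finset.mem_Ico]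
    have step2 : ∑ k ∈ Finset.Ioc m M, 2 * ((3:ℝ) ^ (k - m + 1))⁻¹
        = ∑ j ∈ Finset.range (M - m), 2 * ((3:ℝ) ^ (j + 2))⁻¹ := by
      rw [hioc, Finset.sum_Ico_eq_sum_range]
      have : M + 1 - (m + 1) = M - m := by omega
      rw [this]
      apply Finset.sum_congr rfl
      intro j _
      have hj : m + 1 + j - m + 1 = j + 2 := by omega
      rw [hj]
    rw [step2, geoAux] at step1
    have : (0:ℝ) < ((3:ℝ) ^ (M - m + 1))⁻¹ := by positivity
    linarith
  -- the decomposition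
  have hsplit : t * (3:ℝ) ^ (m - 1) = 2 * (n : ℝ) + (2 * θ m / 3 + r) := by
    have hIcc : Finset.Icc 1 M = Finset.Ioc 0 M := by
      rw [← Finset.Icc_add_one_left_eq_Ioc]; rfl
    have hsum : ∀ f : ℕ → ℝ, ∑ k ∈ Finset.Ioc 0 M, f k
        = (∑ k ∈ Finset.Ioc 0 (m-1), f k) + f m + ∑ k ∈ Finset.Ioc m M, f k := by
      intro f
      rw [← Finset.sum_Ioc_consecutive f (Nat.zero_le m) hm2,
          ← Finset.sum_Ioc_consecutive f (Nat.zero_le (m-1)) (Nat.sub_le m 1)]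
      have hx : Finset.Ioc (m-1) m = {m} := by
        ext k
        simp only [Finset.mem_Ioc, Finset.mem_singleton]
        omega
      rw [hx, Finset.sum_singleton]
    rw [ht, hIcc, Finset.sum_mul, hsum (fun k => 2 * θ k * ((3:ℝ) ^ k)⁻¹ * (3:ℝ) ^ (m-1))]
    have hA : ∑ k ∈ Finset.Ioc 0 (m-1), 2 * θ k * ((3:ℝ) ^ k)⁻¹ * (3:ℝ) ^ (m-1)
        = 2 * (n : ℝ) := by
      rw [hn]
      push_cast
      rw [Finset.mul_sum]
      apply Finset.sum_congr rfl
      intro k hk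
      simp only [Finset.mem_Ioc] at hk
      have hk1 : k ∈ Finset.Icc 1 M := Finset.mem_Icc.mpr ⟨hk.1, le_trans hk.2 (le_trans (Nat.sub_le m 1) hm2)⟩
      rw [hψ k hk1]
      have hpow : (3:ℝ) ^ (m - 1) = 3 ^ k * 3 ^ (m - 1 - k) := by
        rw [← pow_add]; congr 1; omega
      have h3 : (3:ℝ) ^ k ≠ 0 := by positivity
      rw [hpow]
      field_simp
    have hB : 2 * θ m * ((3:ℝ) ^ m)⁻¹ * (3:ℝ) ^ (m-1) = 2 * θ m / 3 := by
      have hpow : (3:ℝ) ^ m = 3 ^ (m - 1) * 3 := by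
        rw [← pow_succ]; congr 1; omega
      have h3 : (3:ℝ) ^ (m-1) ≠ 0 := by positivity
      rw [hpow]
      field_simp
    have hC : ∑ k ∈ Finset.Ioc m M, 2 * θ k * ((3:ℝ) ^ k)⁻¹ * (3:ℝ) ^ (m-1) = r := by
      rw [hr]
      apply Finset.sum_congr rfl
      intro k hk
      simp only [Finset.mem_Ioc] at hk
      have hpow : (3:ℝ) ^ k = 3 ^ (m - 1) * 3 ^ (k - m + 1) := by
        rw [← pow_add]; congr 1; omega
      have h3 : (3:ℝ) ^ (m-1) ≠ 0 := by positivity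
      have h4 : (3:ℝ) ^ (k - m + 1) ≠ 0 := by positivity
      rw [hpow]
      field_simp
    rw [hA, hB, hC]
    ring
  -- the cosine reduction
  have hcos : Real.cos (π * t * (3:ℝ) ^ (m - 1))
      = Real.cos (π * (2 * θ m / 3 + r)) := by
    have : π * t * (3:ℝ) ^ (m - 1) = π * (2 * θ m / 3 + r) + (n : ℝ) * (2 * π) := by
      rw [mul_assoc, hsplit]; ring
    rw [this, Real.cos_add_int_mul_two_pi]
  rw [hcos]
  rcases hθm01 with h0 | h1
  · -- θ m = 0 : cosine is ≥ 1/2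
    rw [h0]
    set c := Real.cos (π * (2 * 0 / 3 + r)) with hc
    have harg : π * (2 * 0 / 3 + r) = π * r := by ring
    have hge : Real.cos (π/3) ≤ c := by
      rw [hc, harg]
      apply Real.cos_le_cos_of_nonneg_of_le_pi
      · positivity
      · linarith [Real.pi_pos]
      · nlinarith [Real.pi_pos]
    rw [Real.cos_pi_div_three] at hge
    have hrelu1 : reluF c = c := max_eq_left (by linarith)
    rw [hrelu1]
    have : -2 * c + 1 ≤ 0 := by linarith
    exact max_eq_right this
  · -- θ m = 1 : cosine is ≤ -1/2
    rw [h1]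
    set c := Real.cos (π * (2 * 1 / 3 + r)) with hc
    have hc23 : Real.cos (2 * π / 3) = -(1/2) := by
      rw [show 2 * π / 3 = π - π/3 by ring, Real.cos_pi_sub, Real.cos_pi_div_three]
    have hle : c ≤ Real.cos (2 * π / 3) := by
      rw [hc]
      apply Real.cos_le_cos_of_nonneg_of_le_pi
      · positivity
      · nlinarith [Real.pi_pos]
      · nlinarith [Real.pi_pos]
    rw [hc23] at hle
    have hrelu1 : reluF c = 0 := max_eq_right (by linarith)
    rw [hrelu1]
    have : reluF (-2 * 0 + 1) = 1 := by
      unfold reluF; norm_num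
    rw [this]

theorem stmt13 (M : ℕ) (hM : 1 ≤ M) (θ : ℕ → ℝ)
    (hθ : ∀ m ∈ Finset.Icc 1 M, θ m = 0 ∨ θ m = 1) :
    ∃ F : (ℕ → ℝ) → ℕ → ℝ,
      IsFFNet 1 1 5 1 {reluF, Real.cos, fun x => (3:ℝ) ^ x} F ∧
      ∀ m ∈ Finset.Icc 1 M, F (fun _ => (m : ℝ)) 0 = θ m := by
  classical
  set t : ℝ := ∑ k ∈ Finset.Icc 1 M, 2 * θ k * ((3:ℝ) ^ k)⁻¹ with ht
  set dims : ℕ → ℕ := fun _ => 1 with hdims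
  set Wt : ℕ → ℕ → ℕ → ℝ := fun l _ _ => if l = 2 then π * t else if l = 4 then -2 else 1 with hWt
  set b : ℕ → ℕ → ℝ := fun l _ => if l = 1 then -1 else if l = 4 then 1 else 0 with hb
  set act : ℕ → ℕ → ℝ → ℝ := fun l _ =>
    if l = 1 then (fun x => (3:ℝ) ^ x) else if l = 2 then Real.cos else reluF with hact
  refine ⟨fun x => mulVecN (Wt 5) 1 (ffLayers dims Wt b act 4 x), ⟨dims, Wt, b, act, rfl, rfl,
    fun l _ _ => le_refl 1, ?_, fun x => rfl⟩, ?_⟩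
  · intro l i
    by_cases h1 : l = 1
    · simp [hact, h1]
    by_cases h2 : l = 2
    · simp [hact, h1, h2]
    · simp [hact, h1, h2]
  · intro m hm
    have hm1 : 1 ≤ m := (Finset.mem_Icc.mp hm).1
    have heval : ffLayers dims Wt b act 4 (fun _ => (m:ℝ))
        = fun _ => reluF (-2 * reluF (Real.cos (π * t * (3:ℝ) ^ (m - 1))) + 1) := by
      funext i
      show act 4 i _ = _
      have e1 : ffLayers dims Wt b act 1 (fun _ => (m:ℝ))
          = fun _ => (3:ℝ) ^ ((m:ℕ) - 1) := by
        funext j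
        show act 1 j (mulVecN (Wt 1) (dims 0) (fun _ => (m:ℝ)) j + b 1 j) = _
        simp only [mulVecN, hdims, Finset.sum_range_one, hWt, hb, hact]
        norm_num
        rw [show (m:ℝ) + -1 = (((m - 1 : ℕ)):ℝ) by push_cast [hm1]; ring,
          Real.rpow_natCast]
      have e2 : ffLayers dims Wt b act 2 (fun _ => (m:ℝ))
          = fun _ => Real.cos (π * t * (3:ℝ) ^ (m - 1)) := by
        funext j
        show act 2 j (mulVecN (Wt 2) (dims 1) (ffLayers dims Wt b act 1 (fun _ => (m:ℝ))) j + b 2 j) = _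
        rw [e1]
        simp only [mulVecN, hdims, Finset.sum_range_one, hWt, hb, hact]
        norm_num
      have e3 : ffLayers dims Wt b act 3 (fun _ => (m:ℝ))
          = fun _ => reluF (Real.cos (π * t * (3:ℝ) ^ (m - 1))) := by
        funext j
        show act 3 j (mulVecN (Wt 3) (dims 2) (ffLayers dims Wt b act 2 (fun _ => (m:ℝ))) j + b 3 j) = _
        rw [e2]
        simp only [mulVecN, hdims, Finset.sum_range_one, hWt, hb, hact]
        norm_num
      show act 4 i (mulVecN (Wt 4) (dims 3) (ffLayers dims Wt b act 3 (fun _ => (m:ℝ))) i + b 4 i) = _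
      rw [e3]
      simp only [mulVecN, hdims, Finset.sum_range_one, hWt, hb, hact]
      norm_num
    show mulVecN (Wt 5) 1 _ 0 = θ m
    rw [heval]
    simp only [mulVecN, Finset.sum_range_one, hWt]
    norm_num
    have hk := keyAux M θ hθ m hm
    rw [← ht] at hk
    rw [← neg_mul]
    exact hk


end
end

section
/- Let M ∈ ℕ with M ≥ 1, let a_1, …, a_M be rationally independent real numbers, and let σ_P : ℝ → ℝ be periodic with period T > 0 (σ_P(x+T) = σ_P(x) for all x) such that there exist x₁ < x₂ with x₂ − x₁ < T and σ_P continuous on [x₁, x₂]. Write σ_P^min := min_{x∈[x₁,x₂]} σ_P(x) and σ_P^max := max_{x∈[x₁,x₂]} σ_P(x). Then the set {(σ_P(w·a_1), σ_P(w·a_2), …, σ_P(w·a_M)) : w ∈ ℝ} is dense in [σ_P^min, σ_P^max]^M. Moreover, if σ_P^min < σ_P^max, then the set {(u·σ_P(w·a_1)+v, u·σ_P(w·a_2)+v, …, u·σ_P(w·a_M)+v) : u, v, w ∈ ℝ} is dense in ℝ^M. -/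
open Finset Real Set MeasureTheory

noncomputable section

section KroneckerAux

open Filter Topology



lemma isolated_of_no_line {F : Type*} [NormedAddCommGroup F] [NormedSpace ℝ F] [ProperSpace F]
    (K : Set F) (hK : IsClosed K)
    (hsmul : ∀ x ∈ K, ∀ n : ℤ, n • x ∈ K)
    (hline : ∀ u : F, u ≠ 0 → ¬ (∀ t : ℝ, t • u ∈ K)) :
    ∃ ε > 0, ∀ x ∈ K, ‖x‖ < ε → x = 0 := by
  by_contra h
  push_neg at h
  have hsel : ∀ n : ℕ, ∃ y : F, y ∈ K ∧ ‖y‖ < 1 / (n + 1) ∧ y ≠ 0 := by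
    intro n
    obtain ⟨x, hxK, hxn, hx0⟩ := h (1 / (n + 1)) (by positivity)
    exact ⟨x, hxK, hxn, hx0⟩
  choose y hyK hyn hy0 using hsel
  have hynorm : ∀ n, 0 < ‖y n‖ := fun n => norm_pos_iff.2 (hy0 n)
  set u : ℕ → F := fun n => ‖y n‖⁻¹ • y n with hu
  have husphere : ∀ n, u n ∈ Metric.sphere (0 : F) 1 := by
    intro n
    simp [hu, norm_smul, abs_of_pos (hynorm n), inv_mul_cancel₀ (hynorm n).ne']
  obtain ⟨v, hv, φ, hφ, hvlim⟩ :=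
    (isCompact_sphere (0 : F) 1).tendsto_subseq husphere
  have hvnorm : ‖v‖ = 1 := by simpa using hv
  have hv0 : v ≠ 0 := by intro h0; rw [h0] at hvnorm; simp at hvnorm
  refine hline v hv0 fun t => ?_
  -- t • v is a limit of elements of K
  set z : ℕ → F := fun k => (⌊t / ‖y (φ k)‖⌋ : ℤ) • y (φ k) with hz
  have hzK : ∀ k, z k ∈ K := fun k => hsmul _ (hyK _) _
  have hzlim : Tendsto z atTop (𝓝 (t • v)) := by
    have hy_to_zero : Tendsto (fun k => ‖y (φ k)‖) atTop (𝓝 0) := by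
      apply squeeze_zero (fun k => (hynorm _).le) (fun k => (hyn (φ k)).le)
      have h1 : Tendsto (fun n : ℕ => 1 / ((n : ℝ) + 1)) atTop (𝓝 0) :=
        tendsto_one_div_add_atTop_nhds_zero_nat
      exact h1.comp (hφ.tendsto_atTop)
    have hc : Tendsto (fun k => (⌊t / ‖y (φ k)‖⌋ : ℝ) * ‖y (φ k)‖) atTop (𝓝 t) := by
      have hdiff : ∀ k, ‖(⌊t / ‖y (φ k)‖⌋ : ℝ) * ‖y (φ k)‖ - t‖ ≤ ‖y (φ k)‖ := by
        intro k
        have hpos := hynorm (φ k)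
        rw [Real.norm_eq_abs, abs_le]
        constructor
        · have h1 : (⌊t / ‖y (φ k)‖⌋ : ℝ) ≥ t / ‖y (φ k)‖ - 1 := by
            have := Int.sub_one_lt_floor (t / ‖y (φ k)‖)
            linarith
          have := mul_le_mul_of_nonneg_right h1 hpos.le
          rw [sub_mul, div_mul_cancel₀ _ hpos.ne'] at this
          linarith
        · have h1 : (⌊t / ‖y (φ k)‖⌋ : ℝ) ≤ t / ‖y (φ k)‖ := Int.floor_le _
          have := mul_le_mul_of_nonneg_right h1 hpos.le
          rw [div_mul_cancel₀ _ hpos.ne'] at this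
          linarith
      have : Tendsto (fun k => (⌊t / ‖y (φ k)‖⌋ : ℝ) * ‖y (φ k)‖ - t) atTop (𝓝 0) :=
        squeeze_zero_norm hdiff hy_to_zero
      simpa using this.add_const t
    have hzk : ∀ k, z k = ((⌊t / ‖y (φ k)‖⌋ : ℝ) * ‖y (φ k)‖) • u (φ k) := by
      intro k
      rw [hz, hu]
      simp only [smul_smul]
      rw [← Int.cast_smul_eq_zsmul ℝ]
      rw [mul_assoc, mul_inv_cancel₀ (hynorm (φ k)).ne', mul_one]
    simp_rw [funext hzk]
    simpa using hc.smul hvlim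
  exact hK.mem_of_tendsto hzlim (Eventually.of_forall hzK)


set_option maxHeartbeats 1000000

variable {M : ℕ}

def kG (a : Fin M → ℝ) (T : ℝ) : AddSubgroup (Fin M → ℝ) where
  carrier := {v : Fin M → ℝ | ∃ (w : ℝ) (k : Fin M → ℤ), v = fun m => w * a m + T * k m}
  zero_mem' := ⟨0, 0, by funext m; simp⟩
  add_mem' := by
    rintro x y ⟨w1, k1, rfl⟩ ⟨w2, k2, rfl⟩
    refine ⟨w1 + w2, k1 + k2, ?_⟩
    funext m
    simp only [Pi.add_apply, Int.cast_add]
    ring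
  neg_mem' := by
    rintro x ⟨w, k, rfl⟩
    refine ⟨-w, -k, ?_⟩
    funext m
    simp only [Pi.neg_apply, Int.cast_neg]
    ring

def kH (a : Fin M → ℝ) (T : ℝ) : AddSubgroup (Fin M → ℝ) := (kG a T).topologicalClosure

def kV (a : Fin M → ℝ) (T : ℝ) : Submodule ℝ (Fin M → ℝ) where
  carrier := {x : Fin M → ℝ | ∀ t : ℝ, t • x ∈ kH a T}
  zero_mem' := fun t => by simpa using (kH a T).zero_mem
  add_mem' := by
    intro x y hx hy t
    rw [smul_add]
    exact (kH a T).add_mem (hx t) (hy t)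
  smul_mem' := by
    intro c x hx t
    rw [smul_smul]
    exact hx (t * c)

lemma kV_mem {a : Fin M → ℝ} {T : ℝ} {x : Fin M → ℝ} :
    x ∈ kV a T ↔ ∀ t : ℝ, t • x ∈ kH a T := Iff.rfl

lemma kV_le_kH {a : Fin M → ℝ} {T : ℝ} {x : Fin M → ℝ} (hx : x ∈ kV a T) : x ∈ kH a T := by
  simpa using kV_mem.1 hx 1

lemma ka_mem_kV {a : Fin M → ℝ} {T : ℝ} : a ∈ kV a T := by
  rw [kV_mem]
  intro t
  apply (kG a T).le_topologicalClosure
  refine ⟨t, 0, ?_⟩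
  funext m
  simp [smul_eq_mul]

lemma ke_mem_kG {a : Fin M → ℝ} {T : ℝ} (i : Fin M) :
    (T • (Pi.single i (1:ℝ) : Fin M → ℝ)) ∈ kG a T := by
  refine ⟨0, Pi.single i (1:ℤ), ?_⟩
  funext m
  by_cases h : m = i <;> simp [h, Pi.single_apply, smul_eq_mul]

lemma kV_top (a : Fin M → ℝ) (ha : LinearIndependent ℚ a) {T : ℝ} (hT : 0 < T) :
    kV a T = ⊤ := by
  classical
  by_contra hV
  obtain ⟨W, hWc⟩ := Submodule.exists_isCompl (kV a T)
  have hWbot : W ≠ ⊥ := by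
    intro h
    exact hV (by simpa [h] using hWc.codisjoint.eq_top)
  set prj : (Fin M → ℝ) →ₗ[ℝ] W := Submodule.linearProjOfIsCompl W (kV a T) hWc.symm with hprj
  have hprjV : ∀ x ∈ kV a T, prj x = 0 := fun x hx =>
    Submodule.linearProjOfIsCompl_apply_right' hWc.symm hx
  have hprjW : ∀ y : W, prj (y : Fin M → ℝ) = y := Submodule.linearProjOfIsCompl_apply_left hWc.symm
  have hsub : ∀ x : Fin M → ℝ, x - (prj x : Fin M → ℝ) ∈ kV a T := by
    intro x
    have h1 : prj (x - (prj x : Fin M → ℝ)) = 0 := by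
      rw [map_sub, hprjW (prj x), sub_self]
    rwa [← Submodule.linearProjOfIsCompl_ker (p := W) (q := kV a T) hWc.symm,
      LinearMap.mem_ker]
  set Ks : Set W := {y : W | (y : Fin M → ℝ) ∈ kH a T} with hKs
  have hKclosed : IsClosed Ks := by
    have : IsClosed ((kH a T : Set (Fin M → ℝ))) := AddSubgroup.isClosed_topologicalClosure _
    exact this.preimage continuous_subtype_val
  have hKsmul : ∀ x ∈ Ks, ∀ n : ℤ, n • x ∈ Ks := by
    intro x hx n
    have hcoe : ((n • x : W) : Fin M → ℝ) = n • (x : Fin M → ℝ) := by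
      rw [← Int.cast_smul_eq_zsmul ℝ (b := x), Submodule.coe_smul, Int.cast_smul_eq_zsmul]
    show ((n • x : W) : Fin M → ℝ) ∈ kH a T
    rw [hcoe]
    exact (kH a T).zsmul_mem hx n
  have hKline : ∀ u : W, u ≠ 0 → ¬ (∀ t : ℝ, t • u ∈ Ks) := by
    intro u hu hline
    have huV : (u : Fin M → ℝ) ∈ kV a T := by
      rw [kV_mem]
      intro t
      have := hline t
      show t • (u : Fin M → ℝ) ∈ kH a T
      rw [show t • (u : Fin M → ℝ) = ((t • u : W) : Fin M → ℝ) by rfl]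
      exact this
    have h0 : (u : Fin M → ℝ) = 0 :=
      (Submodule.disjoint_def.mp hWc.symm.disjoint) u u.2 huV
    exact hu (Subtype.coe_injective (by simpa using h0))
  obtain ⟨ε, hε, hiso⟩ := isolated_of_no_line Ks hKclosed hKsmul hKline
  set g : Fin M → W := fun i => prj (T • (Pi.single i (1:ℝ) : Fin M → ℝ)) with hg
  set Γ : Submodule ℤ W := Submodule.span ℤ (Set.range g) with hΓ
  have hgK : ∀ i, g i ∈ Ks := by
    intro i
    show ((g i : W) : Fin M → ℝ) ∈ kH a T
    have h1 : (T • (Pi.single i (1:ℝ) : Fin M → ℝ)) ∈ kH a T :=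
      (kG a T).le_topologicalClosure (ke_mem_kG i)
    have h2 : (T • (Pi.single i (1:ℝ) : Fin M → ℝ)) - (g i : Fin M → ℝ) ∈ kV a T := hsub _
    have h3 := (kH a T).sub_mem h1 (kV_le_kH h2)
    simpa using h3
  have hΓK : ∀ x : W, x ∈ Γ → x ∈ Ks := by
    intro x hx
    induction hx using Submodule.span_induction with
    | mem x hxr => obtain ⟨i, rfl⟩ := hxr; exact hgK i
    | zero => exact (kH a T).zero_mem
    | add x y _ _ hx hy => exact (kH a T).add_mem hx hy
    | smul n x _ hx => exact hKsmul x hx n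
  haveI hdisc : DiscreteTopology Γ := by
    rw [discreteTopology_iff_isOpen_singleton_zero]
    have hset : ({0} : Set Γ) = {x : Γ | ‖(x : W)‖ < ε} := by
      ext x
      simp only [Set.mem_singleton_iff, Set.mem_setOf_eq]
      constructor
      · rintro rfl; simpa using hε
      · intro hx
        have := hiso (x : W) (hΓK _ x.2) hx
        exact Subtype.coe_injective (by simpa using this)
    rw [hset]
    exact isOpen_induced_iff.mpr
      ⟨{y : W | ‖y‖ < ε}, isOpen_lt continuous_norm continuous_const, rfl⟩
  haveI hlat : IsZLattice ℝ Γ := by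
    constructor
    rw [hΓ, Submodule.span_span_of_tower]
    rw [hg]
    rw [show (Set.range fun i : Fin M => prj (T • (Pi.single i (1:ℝ) : Fin M → ℝ)))
        = prj '' (Set.range fun i : Fin M => T • (Pi.single i (1:ℝ) : Fin M → ℝ)) from
      Set.range_comp prj _, Submodule.span_image]
    have htop : Submodule.span ℝ (Set.range fun i : Fin M => T • (Pi.single i (1:ℝ) : Fin M → ℝ)) = ⊤ := by
      rw [eq_top_iff, ← (Pi.basisFun ℝ (Fin M)).span_eq, Submodule.span_le]
      rintro x ⟨i, rfl⟩
      have hx : (Pi.basisFun ℝ (Fin M)) i = T⁻¹ • (T • (Pi.single i (1:ℝ) : Fin M → ℝ)) := by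
        rw [smul_smul, inv_mul_cancel₀ hT.ne', one_smul, Pi.basisFun_apply]
      rw [hx]
      exact Submodule.smul_mem _ _ (Submodule.subset_span ⟨i, rfl⟩)
    rw [htop, Submodule.map_top, LinearMap.range_eq_top.mpr]
    intro y
    exact ⟨y, hprjW y⟩
  haveI := ZLattice.module_finite ℝ Γ
  haveI := ZLattice.module_free ℝ Γ
  set b := Module.Free.chooseBasis ℤ Γ with hb
  set b' := Module.Basis.ofZLatticeBasis ℝ Γ b with hb'
  haveI : Nontrivial W := Submodule.nontrivial_iff_ne_bot.mpr hWbot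
  haveI : Nonempty (Module.Free.ChooseBasisIndex ℤ Γ) := b'.index_nonempty
  set i₀ := Classical.arbitrary (Module.Free.ChooseBasisIndex ℤ Γ)
  set φ : W →ₗ[ℝ] ℝ := b'.coord i₀ with hφ
  have hint : ∀ x : W, x ∈ Γ → ∃ n : ℤ, φ x = n := by
    intro x hx
    rw [← Module.Basis.ofZLatticeBasis_span (K := ℝ) (b := b)] at hx
    induction hx using Submodule.span_induction with
    | mem x hxr =>
      obtain ⟨j, rfl⟩ := hxr
      rw [hφ, Module.Basis.coord_apply, ← hb', Module.Basis.repr_self]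
      by_cases h : j = i₀
      · exact ⟨1, by simp [h]⟩
      · exact ⟨0, by simp [Finsupp.single_apply, h]⟩
    | zero => exact ⟨0, by simp⟩
    | add x y _ _ hx hy =>
      obtain ⟨n, hn⟩ := hx; obtain ⟨m, hm⟩ := hy
      exact ⟨n + m, by rw [map_add, hn, hm]; push_cast; ring⟩
    | smul n x _ hx =>
      obtain ⟨m, hm⟩ := hx
      refine ⟨n * m, ?_⟩
      rw [← Int.cast_smul_eq_zsmul ℝ, _root_.map_smul, hm, smul_eq_mul]
      push_cast; ring
  choose n hn using fun i => hint (g i) (Submodule.subset_span ⟨i, rfl⟩)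
  have hψa : φ (prj a) = 0 := by rw [hprjV a ka_mem_kV, map_zero]
  have hprja : prj a = ∑ i, a i • prj (Pi.single i (1:ℝ) : Fin M → ℝ) := by
    have hsumrep : a = ∑ i : Fin M, a i • (Pi.single i (1:ℝ) : Fin M → ℝ) := by
      funext m
      simp [Finset.sum_apply, Pi.single_apply, smul_eq_mul]
    conv_lhs => rw [hsumrep]
    rw [map_sum]
    simp
  have hrel : ∑ i, a i * (n i : ℝ) = 0 := by
    have hTn : ∀ i, φ (prj (Pi.single i (1:ℝ) : Fin M → ℝ)) = (n i : ℝ) / T := by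
      intro i
      have h1 : φ (prj (T • (Pi.single i (1:ℝ) : Fin M → ℝ))) = (n i : ℝ) := hn i
      rw [_root_.map_smul, _root_.map_smul, smul_eq_mul] at h1
      field_simp
      linarith [h1]
    have hsum : φ (prj a) = ∑ i, a i * ((n i : ℝ) / T) := by
      rw [hprja, map_sum]
      simp only [_root_.map_smul, smul_eq_mul]
      exact Finset.sum_congr rfl fun i _ => by rw [hTn i]
    rw [hψa] at hsum
    have h2 : ∑ i, a i * ((n i : ℝ) / T) = ∑ i, (a i * (n i:ℝ)) / T :=
      Finset.sum_congr rfl fun i _ => by ring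
    rw [h2, ← Finset.sum_div] at hsum
    rcases div_eq_zero_iff.mp hsum.symm with h | h
    · exact h
    · exact absurd h hT.ne'
  have hnz : ∃ i, n i ≠ 0 := by
    by_contra hall
    push_neg at hall
    have hψ0 : (φ.comp prj) = 0 := by
      apply (Pi.basisFun ℝ (Fin M)).ext
      intro i
      have h1 : φ (prj (T • (Pi.single i (1:ℝ) : Fin M → ℝ))) = ((n i : ℤ) : ℝ) := hn i
      rw [_root_.map_smul, _root_.map_smul, hall i] at h1
      simp only [Int.cast_zero] at h1
      have hT0 : φ (prj (Pi.single i (1:ℝ) : Fin M → ℝ)) = 0 := by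
        rcases smul_eq_zero.mp h1 with h | h
        · exact absurd h hT.ne'
        · exact h
      show (φ.comp prj) ((Pi.basisFun ℝ (Fin M)) i) = 0
      rw [LinearMap.comp_apply, Pi.basisFun_apply]
      exact hT0
    have h1 : φ (b' i₀) = 1 := by
      rw [hφ, Module.Basis.coord_apply, Module.Basis.repr_self, Finsupp.single_eq_same]
    have h2 : φ.comp prj ((b' i₀ : Fin M → ℝ)) = φ (b' i₀) := by
      rw [LinearMap.comp_apply, hprjW]
    rw [hψ0, h1] at h2
    exact zero_ne_one h2
  obtain ⟨i, hi⟩ := hnz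
  have hli := Fintype.linearIndependent_iff.mp ha (fun j => (n j : ℚ)) ?_ i
  · exact hi (by exact_mod_cast hli)
  · have hcast : ∑ j, ((n j : ℚ)) • a j = ∑ j, a j * (n j : ℝ) := by
      apply Finset.sum_congr rfl
      intro j _
      rw [Rat.smul_def]
      push_cast
      ring
    rw [hcast, hrel]

lemma kronecker_flow (a : Fin M → ℝ) (ha : LinearIndependent ℚ a) {T : ℝ} (hT : 0 < T) :
    Dense {v : Fin M → ℝ | ∃ (w : ℝ) (k : Fin M → ℤ), v = fun m => w * a m + T * k m} := by
  intro x
  have hx : x ∈ kV a T := by rw [kV_top a ha hT]; trivial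
  exact kV_le_kH hx
theorem stmt16' (M : ℕ) (hM : 1 ≤ M) (a : Fin M → ℝ) (ha : LinearIndependent ℚ a)
    (σP : ℝ → ℝ) (T : ℝ) (hT : 0 < T) (hper : ∀ x, σP (x + T) = σP x)
    (x₁ x₂ : ℝ) (h12 : x₁ < x₂) (h12T : x₂ - x₁ < T)
    (hcont : ContinuousOn σP (Set.Icc x₁ x₂))
    (σmin σmax : ℝ)
    (hmin : IsLeast (σP '' Set.Icc x₁ x₂) σmin)
    (hmax : IsGreatest (σP '' Set.Icc x₁ x₂) σmax) :
    (Set.univ.pi fun _ : Fin M => Set.Icc σmin σmax) ⊆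
        closure {v : Fin M → ℝ | ∃ w : ℝ, v = fun m => σP (w * a m)} ∧
      (σmin < σmax →
        Dense {v : Fin M → ℝ | ∃ u c w : ℝ, v = fun m => u * σP (w * a m) + c}) := by
  haveI : Nonempty (Fin M) := ⟨⟨0, hM⟩⟩
  have hperiodic : Function.Periodic σP T := hper
  have part1 : (Set.univ.pi fun _ : Fin M => Set.Icc σmin σmax) ⊆
      closure {v : Fin M → ℝ | ∃ w : ℝ, v = fun m => σP (w * a m)} := by
    intro v hv
    rw [Metric.mem_closure_iff]
    intro ε hε
    have key : ∀ m : Fin M, ∃ y' δ', 0 < δ' ∧ ∀ z : ℝ, |z - y'| < δ' →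
        z ∈ Set.Icc x₁ x₂ ∧ |σP z - v m| < ε := by
      intro m
      have hvm : v m ∈ Set.Icc σmin σmax := hv m (Set.mem_univ m)
      obtain ⟨p, hp, hpv⟩ := hmin.1
      obtain ⟨q, hq, hqv⟩ := hmax.1
      have hIcc_eq : Set.Icc x₁ x₂ = Set.uIcc x₁ x₂ := (Set.uIcc_of_le h12.le).symm
      have hsub : Set.uIcc p q ⊆ Set.Icc x₁ x₂ := by
        rw [hIcc_eq] at hp hq ⊢
        exact Set.uIcc_subset_uIcc hp hq
      have hminmax : σmin ≤ σmax := hmin.2 hmax.1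
      have hy : ∃ y ∈ Set.uIcc p q, σP y = v m := by
        have h := intermediate_value_uIcc (hcont.mono hsub)
        have hvm' : v m ∈ Set.uIcc (σP p) (σP q) := by
          rw [hpv, hqv, Set.uIcc_of_le hminmax]
          exact hvm
        exact h hvm'
      obtain ⟨y, hyu, hyv⟩ := hy
      have hyIcc : y ∈ Set.Icc x₁ x₂ := hsub hyu
      have hc := hcont y hyIcc
      rw [Metric.continuousWithinAt_iff] at hc
      obtain ⟨δ, hδ, hδprop⟩ := hc ε hε
      set c := min (δ/2) ((x₂ - x₁)/2) with hcdef
      have hcpos : 0 < c := lt_min (by linarith) (by linarith)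
      have hcle : c ≤ δ/2 := min_le_left _ _
      have hcle2 : c ≤ (x₂ - x₁)/2 := min_le_right _ _
      set y' := max (x₁ + c/2) (min y (x₂ - c/2)) with hy'def
      have hy1 : y - c/2 ≤ y' :=
        le_max_of_le_right (le_min (by linarith) (by linarith [hyIcc.2]))
      have hy2 : y' ≤ y + c/2 :=
        max_le (by linarith [hyIcc.1]) (le_trans (min_le_left _ _) (by linarith))
      have hy3 : x₁ + c/2 ≤ y' := le_max_left _ _
      have hy4 : y' ≤ x₂ - c/2 :=
        max_le (by linarith) (min_le_right _ _)
      refine ⟨y', c/4, by positivity, ?_⟩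
      intro z hz
      rw [abs_lt] at hz
      have hzIcc : z ∈ Set.Icc x₁ x₂ := ⟨by linarith, by linarith⟩
      have hzy : dist z y < δ := by
        rw [Real.dist_eq, abs_lt]
        constructor <;> linarith
      have := hδprop hzIcc hzy
      rw [hyv, Real.dist_eq] at this
      exact ⟨hzIcc, this⟩
    choose y' δ' hδ' hprop using key
    have hne : (Finset.univ : Finset (Fin M)).Nonempty := Finset.univ_nonempty
    set r := Finset.univ.inf' hne δ' with hrdef
    have hr : 0 < r := by
      rw [hrdef, Finset.lt_inf'_iff]
      exact fun i _ => hδ' i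
    obtain ⟨g, hgball, hgmem⟩ := Metric.dense_iff.mp (kronecker_flow a ha hT) y' r hr
    obtain ⟨w, k, rfl⟩ := hgmem
    refine ⟨(fun m => σP (w * a m)), ⟨w, rfl⟩, ?_⟩
    rw [dist_pi_lt_iff hε]
    intro m
    have hgm : |w * a m + T * k m - y' m| < δ' m := by
      have h1 : dist (fun m => w * a m + T * k m : Fin M → ℝ) y' < r :=
        Metric.mem_ball.mp hgball
      have h2 := dist_le_pi_dist (fun m => w * a m + T * k m : Fin M → ℝ) y' m
      have h3 : r ≤ δ' m := Finset.inf'_le _ (Finset.mem_univ m)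
      rw [Real.dist_eq] at h2
      linarith
    have hzprop := hprop m (w * a m + T * k m) hgm
    have hps : σP (w * a m) = σP (w * a m + T * k m) := by
      have h := hperiodic.sub_zsmul_eq (x := w * a m + T * ((k m : ℤ) : ℝ)) (k m)
      rw [zsmul_eq_mul] at h
      conv_lhs => rw [show w * a m = w * a m + T * ((k m : ℤ) : ℝ) - ((k m : ℤ) : ℝ) * T by ring]
      exact h
    rw [Real.dist_eq]
    have h2 := hzprop.2
    rw [← hps] at h2
    rwa [abs_sub_comm] at h2
  refine ⟨part1, ?_⟩
  intro hlt
  rw [Metric.dense_iff]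
  intro z r hr
  set u := (2 * ‖z‖ + 2) / (σmax - σmin) with hudef
  have hu : 0 < u := by
    apply div_pos
    · have := norm_nonneg z; linarith
    · linarith
  set c := -(u * σmin) - ‖z‖ - 1 with hcdef
  set v : Fin M → ℝ := fun m => (z m - c) / u with hvdef
  have hv : v ∈ Set.univ.pi fun _ : Fin M => Set.Icc σmin σmax := by
    intro m _
    have h1 : |z m| ≤ ‖z‖ := by
      have := norm_le_pi_norm z m
      rwa [Real.norm_eq_abs] at this
    rw [abs_le] at h1
    have husigma : u * (σmax - σmin) = 2 * ‖z‖ + 2 := by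
      rw [hudef, div_mul_cancel₀]
      linarith
    constructor
    · rw [le_div_iff₀ hu]
      -- σmin * u ≤ z m - c
      rw [hcdef]
      nlinarith
    · rw [div_le_iff₀ hu]
      rw [hcdef]
      nlinarith
  have hcl := part1 hv
  rw [Metric.mem_closure_iff] at hcl
  obtain ⟨s, ⟨w, rfl⟩, hs⟩ := hcl (r / u) (by positivity)
  refine ⟨fun m => u * σP (w * a m) + c, ?_, ⟨u, c, w, rfl⟩⟩
  rw [Metric.mem_ball, dist_pi_lt_iff hr]
  intro m
  have h1 : dist (v m) (σP (w * a m)) < r / u :=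
    lt_of_le_of_lt (dist_le_pi_dist v (fun m => σP (w * a m)) m) hs
  rw [Real.dist_eq] at h1 ⊢
  have hvm : u * v m = z m - c := by
    rw [hvdef]
    field_simp
  have heq : u * σP (w * a m) + c - z m = u * (σP (w * a m) - v m) := by
    rw [mul_sub, hvm]; ring
  rw [heq, abs_mul, abs_of_pos hu]
  have h2 : |σP (w * a m) - v m| < r / u := by rwa [abs_sub_comm]
  calc u * |σP (w * a m) - v m| < u * (r / u) := by
        exact mul_lt_mul_of_pos_left h2 hu
    _ = r := by field_simp


end KroneckerAux

theorem stmt16 (M : ℕ) (hM : 1 ≤ M) (a : Fin M → ℝ) (ha : LinearIndependent ℚ a)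
    (σP : ℝ → ℝ) (T : ℝ) (hT : 0 < T) (hper : ∀ x, σP (x + T) = σP x)
    (x₁ x₂ : ℝ) (h12 : x₁ < x₂) (h12T : x₂ - x₁ < T)
    (hcont : ContinuousOn σP (Set.Icc x₁ x₂))
    (σmin σmax : ℝ)
    (hmin : IsLeast (σP '' Set.Icc x₁ x₂) σmin)
    (hmax : IsGreatest (σP '' Set.Icc x₁ x₂) σmax) :
    (Set.univ.pi fun _ : Fin M => Set.Icc σmin σmax) ⊆
        closure {v : Fin M → ℝ | ∃ w : ℝ, v = fun m => σP (w * a m)} ∧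
      (σmin < σmax →
        Dense {v : Fin M → ℝ | ∃ u c w : ℝ, v = fun m => u * σP (w * a m) + c}) :=
  stmt16' M hM a ha σP T hT hper x₁ x₂ h12 h12T hcont σmin σmax hmin hmax

end
end
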